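/- arXiv:1301.1226 — 4 statements merged into one kernel-verified Lean document; each statement's English description precedes it below -/
import Mathlib

section
/- Let Λ₁ and Λ₂ be vertex lattices in C. Then (Λ₁ ∩ Λ₂)^♯ = Λ₁^♯ + Λ₂^♯, and the following are equivalent: (i) Λ₁ ∩ Λ₂ is a vertex lattice; (ii) Λ₁^♯ ⊆ Λ₂; (iii) Λ₂^♯ ⊆ Λ₁. -/
set_option maxHeartbeats 1000000
set_option synthInstance.maxHeartbeats 400000

open scoped Pointwise
/- Setup: `p` an odd prime, `E` a ramified quadratic extension of `ℚ_p` with Galois automorphism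
`σ`, uniformizer `π` (with `π² = π₀ ∈ ℚ_p` a uniformizer, `σ π = -π`), ring of integers
`𝒪_E = integralClosure ℤ_p E`.  `C` is an `n`-dimensional `E`-vector space with a nondegenerate
hermitian form `h`.  An `𝒪_E`-lattice in `C` is modelled as a finitely generated `ℤ_p`-submodule
`Λ` which spans `C` over `ℚ_p` and is stable under `π` (note `𝒪_E = ℤ_p[π]`). -/

variable (p : ℕ) [Fact p.Prime]
variable {E : Type} [Field E] [Algebra ℚ_[p] E] [Algebra ℤ_[p] E] [IsScalarTower ℤ_[p] ℚ_[p] E]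
variable {C : Type} [AddCommGroup C] [Module E C] [Module ℚ_[p] C] [Module ℤ_[p] C]
  [IsScalarTower ℚ_[p] E C] [IsScalarTower ℤ_[p] E C] [IsScalarTower ℤ_[p] ℚ_[p] C]

/-- The dual lattice `Λ^♯ = {x ∈ C : h x y ∈ 𝒪_E for all y ∈ Λ}` (as a set). -/
def sharpSet (h : C → C → E) (Λ : Submodule ℤ_[p] C) : Set C :=
  {x | ∀ y ∈ Λ, h x y ∈ integralClosure ℤ_[p] E}

/-- `Λ` is an `𝒪_E`-lattice in `C`: finitely generated, full, and stable under `π`. -/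
def IsOLattice (π : E) (Λ : Submodule ℤ_[p] C) : Prop :=
  Λ.FG ∧ Submodule.span ℚ_[p] (Λ : Set C) = ⊤ ∧ ∀ x ∈ Λ, π • x ∈ Λ

/-- `Λ` is a vertex lattice: an `𝒪_E`-lattice with `πΛ ⊆ Λ^♯ ⊆ Λ`. -/
def IsVertexLattice (π : E) (h : C → C → E) (Λ : Submodule ℤ_[p] C) : Prop :=
  IsOLattice p π Λ ∧ (∀ x ∈ Λ, π • x ∈ sharpSet p h Λ) ∧ sharpSet p h Λ ⊆ (Λ : Set C)

/-- The type of a vertex lattice `Λ` is `t` iff the `𝔽_p`-vector space `Λ/Λ^♯` has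
dimension `t`, i.e. the index `[Λ : Λ^♯]` equals `p^t`. -/
def HasTypeN (h : C → C → E) (Λ : Submodule ℤ_[p] C) (t : ℕ) : Prop :=
  (AddSubgroup.closure (sharpSet p h Λ)).relIndex Λ.toAddSubgroup = p ^ t

/-! ### Auxiliary lemmas -/

/-- Coordinate functionals for the basis `{1, π}` of `E` over `ℚ_p`. -/
theorem aux_exists_coord (hp2 : p ≠ 2) (σ : E ≃ₐ[ℚ_[p]] E) (π : E) (hσπ : σ π = -π)
    (hπ : ∃ π₀ : ℚ_[p], algebraMap ℚ_[p] E π₀ = π ^ 2 ∧ ‖π₀‖ = (p : ℝ)⁻¹)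
    (hrank : Module.finrank ℚ_[p] E = 2) :
    ∃ c₀ c₁ : E →ₗ[ℚ_[p]] ℚ_[p],
      (∀ a : E, a = algebraMap ℚ_[p] E (c₀ a) + c₁ a • π) ∧
      (∀ u : ℚ_[p], c₀ (algebraMap ℚ_[p] E u) = u) ∧
      (∀ u : ℚ_[p], c₁ (algebraMap ℚ_[p] E u) = 0) ∧ c₀ π = 0 ∧ c₁ π = 1 := by
  obtain ⟨π₀, hπ₀, hπ₀n⟩ := hπ
  haveI : CharZero E := charZero_of_injective_algebraMap (algebraMap ℚ_[p] E).injective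
  have hπne : π ≠ 0 := by
    intro h0
    have : ‖π₀‖ = 0 := by
      have : algebraMap ℚ_[p] E π₀ = 0 := by rw [hπ₀, h0]; ring
      have : π₀ = 0 := by
        have := (algebraMap ℚ_[p] E).injective
        exact this (by simpa using ‹algebraMap ℚ_[p] E π₀ = 0›)
      simp [this]
    rw [hπ₀n] at this
    have hp0 : (0:ℝ) < p := by exact_mod_cast (Fact.out : p.Prime).pos
    exact absurd this (by positivity)
  have hli : LinearIndependent ℚ_[p] ![(1 : E), π] := by
    rw [LinearIndependent.pair_iff]
    intro s t hst
    by_cases ht : t = 0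
    · subst ht
      simp only [zero_smul, add_zero, smul_eq_zero, one_ne_zero, or_false] at hst
      exact ⟨hst, rfl⟩
    · exfalso
      have hst' : algebraMap ℚ_[p] E s + algebraMap ℚ_[p] E t * π = 0 := by
        rw [Algebra.smul_def, Algebra.smul_def, mul_one] at hst; exact hst
      have hσ1 : algebraMap ℚ_[p] E s - algebraMap ℚ_[p] E t * π = 0 := by
        have h' := congrArg σ hst'
        rw [map_add, map_mul, AlgEquiv.commutes, AlgEquiv.commutes, hσπ, map_zero] at h'
        rw [← h']; ring
      have h2 : algebraMap ℚ_[p] E t * (π + π) = 0 := by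
        linear_combination hst' - hσ1
      have h3 : π + π = 0 := by
        rcases mul_eq_zero.mp h2 with h' | h'
        · exact absurd ((map_eq_zero_iff _ (algebraMap ℚ_[p] E).injective).mp h') ht
        · exact h'
      exact hπne (add_self_eq_zero.mp h3)
  have hcard : Fintype.card (Fin 2) = Module.finrank ℚ_[p] E := by simp [hrank]
  let b : Module.Basis (Fin 2) ℚ_[p] E := basisOfLinearIndependentOfCardEqFinrank hli hcard
  have hb : ⇑b = ![(1 : E), π] := coe_basisOfLinearIndependentOfCardEqFinrank hli hcard
  have hb0 : b 0 = 1 := by rw [hb]; rfl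
  have hb1 : b 1 = π := by rw [hb]; rfl
  refine ⟨b.coord 0, b.coord 1, ?_, ?_, ?_, ?_, ?_⟩
  · intro a
    have hthis := b.sum_repr a
    rw [Fin.sum_univ_two, hb0, hb1] at hthis
    simp only [Module.Basis.coord_apply]
    rw [Algebra.algebraMap_eq_smul_one]
    exact hthis.symm
  · intro u
    have : algebraMap ℚ_[p] E u = u • b 0 := by
      rw [hb0, Algebra.algebraMap_eq_smul_one]
    rw [this]
    simp [Module.Basis.coord_apply]
  · intro u
    have : algebraMap ℚ_[p] E u = u • b 0 := by
      rw [hb0, Algebra.algebraMap_eq_smul_one]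
    rw [this]
    simp [Module.Basis.coord_apply]
  · rw [← hb1]; simp [Module.Basis.coord_apply]
  · rw [← hb1]; simp [Module.Basis.coord_apply]

/-- Characterization of the ring of integers `𝒪_E = ℤ_p ⊕ ℤ_p·π`. -/
theorem aux_mem_OE (hp2 : p ≠ 2) (σ : E ≃ₐ[ℚ_[p]] E) (π : E) (hσπ : σ π = -π)
    (π₀ : ℚ_[p]) (hπ₀ : algebraMap ℚ_[p] E π₀ = π ^ 2) (hπ₀n : ‖π₀‖ = (p : ℝ)⁻¹)
    (u v : ℚ_[p]) :
    algebraMap ℚ_[p] E u + v • π ∈ integralClosure ℤ_[p] E ↔ ‖u‖ ≤ 1 ∧ ‖v‖ ≤ 1 := by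
  have hp1 : (1:ℝ) < p := by exact_mod_cast (Fact.out : p.Prime).one_lt
  have hp0 : (0:ℝ) < p := lt_trans one_pos hp1
  have halg : ∀ w : ℚ_[p], ‖w‖ ≤ 1 → algebraMap ℚ_[p] E w ∈ integralClosure ℤ_[p] E := by
    intro w hw
    have : algebraMap ℚ_[p] E w = algebraMap ℤ_[p] E ⟨w, hw⟩ := by
      rw [IsScalarTower.algebraMap_apply ℤ_[p] ℚ_[p] E (⟨w, hw⟩ : ℤ_[p])]; rfl
    rw [this]
    exact Subalgebra.algebraMap_mem _ _
  have hπint : π ∈ integralClosure ℤ_[p] E := by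
    rw [mem_integralClosure_iff]
    have hn : ‖π₀‖ ≤ 1 := by rw [hπ₀n]; rw [inv_le_one_iff₀]; right; linarith
    obtain ⟨z, hz⟩ : ∃ z : ℤ_[p], algebraMap ℤ_[p] ℚ_[p] z = π₀ := ⟨⟨π₀, hn⟩, rfl⟩
    refine ⟨Polynomial.X ^ 2 - Polynomial.C z, ?_, ?_⟩
    · exact Polynomial.monic_X_pow_sub_C _ (by norm_num)
    · simp only [Polynomial.eval₂_sub, Polynomial.eval₂_pow, Polynomial.eval₂_X,
        Polynomial.eval₂_C]
      rw [IsScalarTower.algebraMap_apply ℤ_[p] ℚ_[p] E, hz, hπ₀]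
      ring
  constructor
  · intro ha
    have hσa : σ (algebraMap ℚ_[p] E u + v • π) = algebraMap ℚ_[p] E u - v • π := by
      rw [map_add, AlgEquiv.commutes, Algebra.smul_def, map_mul, AlgEquiv.commutes, hσπ,
        mul_neg, ← Algebra.smul_def, ← sub_eq_add_neg]
    have hσmem : algebraMap ℚ_[p] E u - v • π ∈ integralClosure ℤ_[p] E := by
      rw [← hσa]
      rw [mem_integralClosure_iff] at ha ⊢
      exact IsIntegral.map (AlgHom.restrictScalars ℤ_[p] σ.toAlgHom) ha
    have hint : ∀ w : ℚ_[p], algebraMap ℚ_[p] E w ∈ integralClosure ℤ_[p] E → ‖w‖ ≤ 1 := by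
      intro w hw
      rw [mem_integralClosure_iff] at hw
      have h2 : IsIntegral ℤ_[p] w :=
        (isIntegral_algebraMap_iff (algebraMap ℚ_[p] E).injective).mp hw
      obtain ⟨z, hz⟩ := IsIntegrallyClosed.isIntegral_iff.mp h2
      rw [← hz]
      exact z.2
    have h2u : ‖2 * u‖ ≤ 1 := by
      apply hint
      have : algebraMap ℚ_[p] E (2 * u) =
          (algebraMap ℚ_[p] E u + v • π) + (algebraMap ℚ_[p] E u - v • π) := by
        rw [map_mul, map_ofNat]; ring
      rw [this]
      exact add_mem ha hσmem
    have hu : ‖u‖ ≤ 1 := by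
      have h2 : ‖(2 : ℚ_[p])‖ = 1 := by
        have hle : ‖((2:ℤ) : ℚ_[p])‖ ≤ 1 := Padic.norm_int_le_one _
        have hlt : ¬ ‖((2:ℤ) : ℚ_[p])‖ < 1 := by
          rw [Padic.norm_intCast_lt_one_iff]
          intro hdvd
          have h2' : (p : ℤ) ≤ 2 := Int.le_of_dvd (by norm_num) hdvd
          have h3' := (Fact.out : p.Prime).two_le
          omega
        push_cast at hle hlt ⊢
        linarith
      rwa [norm_mul, h2, one_mul] at h2u
    refine ⟨hu, ?_⟩
    have hN : ‖u ^ 2 - v ^ 2 * π₀‖ ≤ 1 := by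
      apply hint
      have : algebraMap ℚ_[p] E (u ^ 2 - v ^ 2 * π₀) =
          (algebraMap ℚ_[p] E u + v • π) * (algebraMap ℚ_[p] E u - v • π) := by
        rw [map_sub, map_pow, map_mul, map_pow, hπ₀, Algebra.smul_def]; ring
      rw [this]
      exact mul_mem ha hσmem
    have hv2 : ‖v ^ 2 * π₀‖ ≤ 1 := by
      have heq : v ^ 2 * π₀ = u ^ 2 - (u ^ 2 - v ^ 2 * π₀) := by ring
      rw [heq, sub_eq_add_neg]
      refine le_trans (Padic.nonarchimedean _ _) ?_
      rw [norm_neg]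
      apply max_le _ hN
      rw [norm_pow]
      exact pow_le_one₀ (norm_nonneg _) hu
    by_cases hv0 : v = 0
    · simp [hv0]
    have hvnorm : ‖v‖ = (p : ℝ) ^ (-v.valuation) := Padic.norm_eq_zpow_neg_valuation hv0
    rw [norm_mul, norm_pow, hvnorm, hπ₀n] at hv2
    -- (p ^ (-m))^2 * p⁻¹ ≤ 1
    have hkey : (p : ℝ) ^ (-2 * v.valuation) ≤ (p : ℝ) ^ (1:ℤ) := by
      have : ((p:ℝ) ^ (-v.valuation)) ^ 2 = (p:ℝ) ^ (-2 * v.valuation) := by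
        rw [← zpow_natCast (((p:ℝ))^(-v.valuation)) 2, ← zpow_mul]
        ring_nf
      rw [this] at hv2
      -- direct: from a * p⁻¹ ≤ 1 deduce a ≤ p
      have h3 : (p : ℝ) ^ (-2 * v.valuation) ≤ p := by
        have h4 := mul_le_mul_of_nonneg_right hv2 (le_of_lt hp0)
        rwa [mul_assoc, inv_mul_cancel₀ (ne_of_gt hp0), mul_one, one_mul] at h4
      simpa using h3
    have hm : 0 ≤ v.valuation := by
      have := (zpow_le_zpow_iff_right₀ hp1).mp hkey
      omega
    rw [hvnorm]
    calc (p:ℝ) ^ (-v.valuation) ≤ (p:ℝ) ^ (0:ℤ) := by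
          apply (zpow_le_zpow_iff_right₀ hp1).mpr; omega
      _ = 1 := by norm_num
  · rintro ⟨hu, hv⟩
    refine add_mem (halg u hu) ?_
    rw [Algebra.smul_def]
    exact mul_mem (halg v hv) hπint

/-- Every full finitely generated `ℤ_p`-submodule of `C` is the `ℤ_p`-span of a
`ℚ_p`-basis of `C`. -/
theorem aux_lattice_basis (Λ : Submodule ℤ_[p] C) (hfg : Λ.FG)
    (hfull : Submodule.span ℚ_[p] (Λ : Set C) = ⊤) :
    ∃ (ι : Type) (_ : Fintype ι) (b : Module.Basis ι ℚ_[p] C),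
      Λ = Submodule.span ℤ_[p] (Set.range ⇑b) := by
  haveI : NoZeroSMulDivisors ℤ_[p] C := by
    refine ⟨fun {c x} hcx => ?_⟩
    by_cases hc : c = 0
    · exact Or.inl hc
    · right
      have h1 : (algebraMap ℤ_[p] ℚ_[p] c) • x = 0 := by rwa [algebraMap_smul]
      have h2 : algebraMap ℤ_[p] ℚ_[p] c ≠ 0 := by
        rw [PadicInt.algebraMap_apply]
        exact_mod_cast PadicInt.coe_ne_zero.mpr hc
      rcases smul_eq_zero.mp h1 with h | h
      · exact absurd h h2
      · exact h
  haveI : Module.Finite ℤ_[p] ↥Λ := Module.Finite.iff_fg.mpr hfg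
  let ι := Module.Free.ChooseBasisIndex ℤ_[p] ↥Λ
  haveI : Fintype ι := inferInstance
  let b0 := Module.Free.chooseBasis ℤ_[p] ↥Λ
  let v : ι → C := fun i => (b0 i : C)
  have hli0 : LinearIndependent ℤ_[p] v :=
    b0.linearIndependent.map' Λ.subtype (Submodule.ker_subtype Λ)
  have hli : LinearIndependent ℚ_[p] v :=
    hli0.localization ℚ_[p] (nonZeroDivisors ℤ_[p])
  have hsp0 : Submodule.span ℤ_[p] (Set.range v) = Λ := by
    have hrv : Set.range v = Λ.subtype '' (Set.range b0) := by
      rw [← Set.range_comp]; rfl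
    rw [hrv, ← Submodule.map_span, b0.span_eq, Submodule.map_top, Submodule.range_subtype]
  have hsp : ⊤ ≤ Submodule.span ℚ_[p] (Set.range v) := by
    rw [← hfull, Submodule.span_le]
    intro x hx
    have hx' : x ∈ Submodule.span ℤ_[p] (Set.range v) := hsp0 ▸ hx
    exact Submodule.span_le_restrictScalars ℤ_[p] ℚ_[p] _ hx'
  refine ⟨ι, inferInstance, Module.Basis.mk hli hsp, ?_⟩
  rw [Module.Basis.coe_mk]
  exact hsp0.symm

/- STATEMENT 8 -/
theorem statement8
    (hp2 : p ≠ 2)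
    (σ : E ≃ₐ[ℚ_[p]] E) (π : E) (hσπ : σ π = -π)
    (hπ : ∃ π₀ : ℚ_[p], algebraMap ℚ_[p] E π₀ = π ^ 2 ∧ ‖π₀‖ = (p : ℝ)⁻¹)
    (hrank : Module.finrank ℚ_[p] E = 2)
    (n : ℕ) (hn : Module.finrank E C = n)
    (h : C → C → E)
    (haddl : ∀ x x' y, h (x + x') y = h x y + h x' y)
    (hsmull : ∀ (a : E) (x y : C), h (a • x) y = a * h x y)
    (hherm : ∀ x y, h y x = σ (h x y))
    (hnd : ∀ x, (∀ y, h x y = 0) → x = 0)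
    (Λ₁ Λ₂ : Submodule ℤ_[p] C)
    (h₁ : IsVertexLattice p π h Λ₁) (h₂ : IsVertexLattice p π h Λ₂) :
    sharpSet p h (Λ₁ ⊓ Λ₂) = sharpSet p h Λ₁ + sharpSet p h Λ₂ ∧
    (IsVertexLattice p π h (Λ₁ ⊓ Λ₂) ↔ sharpSet p h Λ₁ ⊆ (Λ₂ : Set C)) ∧
    (sharpSet p h Λ₁ ⊆ (Λ₂ : Set C) ↔ sharpSet p h Λ₂ ⊆ (Λ₁ : Set C)) := by
  classical
  obtain ⟨π₀, hπ₀, hπ₀n⟩ := hπ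
  obtain ⟨c₀, c₁, hrepr, hc₀a, hc₁a, hc₀π, hc₁π⟩ :=
    aux_exists_coord p hp2 σ π hσπ ⟨π₀, hπ₀, hπ₀n⟩ hrank
  -- membership in 𝒪_E via coordinates
  have hmemO : ∀ a : E, a ∈ integralClosure ℤ_[p] E ↔ ‖c₀ a‖ ≤ 1 ∧ ‖c₁ a‖ ≤ 1 := by
    intro a
    have := aux_mem_OE p hp2 σ π hσπ π₀ hπ₀ hπ₀n (c₀ a) (c₁ a)
    rw [← hrepr a] at this
    exact this
  have hcoord : ∀ u v : ℚ_[p],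
      c₀ (algebraMap ℚ_[p] E u + v • π) = u ∧ c₁ (algebraMap ℚ_[p] E u + v • π) = v := by
    intro u v
    constructor
    · rw [map_add, map_smul, hc₀a, hc₀π]; simp
    · rw [map_add, map_smul, hc₁a, hc₁π]; simp
  -- hermitian form facts
  have haddr : ∀ x y y', h x (y + y') = h x y + h x y' := by
    intro x y y'
    rw [hherm (y + y') x, haddl, map_add, ← hherm y x, ← hherm y' x]
  have hsmulr : ∀ (a : E) (x y : C), h x (a • y) = σ a * h x y := by
    intro a x y
    rw [hherm (a • y) x, hsmull, map_mul, ← hherm y x]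
  have hπr : ∀ x y : C, h x (π • y) = -(π * h x y) := by
    intro x y
    rw [hsmulr, hσπ]; ring
  -- the ℚ_p-bilinear coordinate form
  obtain ⟨B, hB⟩ : ∃ B : LinearMap.BilinForm ℚ_[p] C, ∀ x y, B x y = c₁ (h x y) := by
    refine ⟨LinearMap.mk₂ ℚ_[p] (fun x y => c₁ (h x y)) ?_ ?_ ?_ ?_, fun _ _ => rfl⟩
    · intro m₁ m₂ n; rw [haddl, map_add]
    · intro a m n
      rw [← algebraMap_smul E a m, hsmull, ← Algebra.smul_def, map_smul, smul_eq_mul]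
    · intro m n₁ n₂; rw [haddr, map_add]
    · intro a m n
      rw [← algebraMap_smul E a n, hsmulr, AlgEquiv.commutes, ← Algebra.smul_def,
        map_smul, smul_eq_mul]
  have hmem1 : ∀ w : ℚ_[p], w ∈ (1 : Submodule ℤ_[p] ℚ_[p]) ↔ ‖w‖ ≤ 1 := by
    intro w
    rw [Submodule.mem_one]
    constructor
    · rintro ⟨z, rfl⟩; exact z.2
    · intro hw; exact ⟨⟨w, hw⟩, rfl⟩
  -- the key coordinate computation
  have hkey : ∀ x y : C, c₁ (h x (π • y)) = -(c₀ (h x y)) := by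
    intro x y
    have e1 : h x (π • y) =
        algebraMap ℚ_[p] E (-(c₁ (h x y)) * π₀) + (-(c₀ (h x y))) • π := by
      rw [hπr]
      nth_rewrite 1 [hrepr (h x y)]
      simp only [Algebra.smul_def, map_mul, map_neg, hπ₀]
      ring
    rw [e1]
    exact (hcoord _ _).2
  -- sharpSet equals the dual submodule, for π-stable lattices
  have hsharp : ∀ Λ : Submodule ℤ_[p] C, (∀ x ∈ Λ, π • x ∈ Λ) →
      sharpSet p h Λ = (B.dualSubmodule Λ : Set C) := by
    intro Λ hst
    ext x
    simp only [sharpSet, Set.mem_setOf_eq, SetLike.mem_coe,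
      LinearMap.BilinForm.mem_dualSubmodule]
    constructor
    · intro hx y hy
      rw [hmem1, hB]
      exact ((hmemO _).mp (hx y hy)).2
    · intro hx y hy
      have h1 : ‖c₁ (h x y)‖ ≤ 1 := by
        rw [← hB]; exact (hmem1 _).mp (hx y hy)
      have h2 : ‖c₁ (h x (π • y))‖ ≤ 1 := by
        rw [← hB]; exact (hmem1 _).mp (hx _ (hst y hy))
      refine (hmemO _).mpr ⟨?_, h1⟩
      calc ‖c₀ (h x y)‖ = ‖c₁ (h x (π • y))‖ := by rw [hkey, norm_neg]
        _ ≤ 1 := h2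
  -- B is nondegenerate
  have hBnd : B.Nondegenerate := by
    refine ⟨?_, ?_⟩
    intro x hx
    apply hnd x
    intro y
    have h1 : c₁ (h x y) = 0 := by rw [← hB]; exact hx y
    have h2 : c₀ (h x y) = 0 := by
      have hthis := hkey x y
      rw [← hB, hx (π • y)] at hthis
      exact neg_eq_zero.mp hthis.symm
    rw [hrepr (h x y), h1, h2]
    simp
    intro y hy
    apply hnd y
    intro x
    rw [hherm x y]
    have h1 : c₁ (h x y) = 0 := by rw [← hB]; exact hy x
    have h2 : c₀ (h x y) = 0 := by
      have hthis := hkey x y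
      rw [hπr, map_neg, neg_inj, ← hsmull, ← hB, hy (π • x)] at hthis
      exact hthis.symm
    rw [hrepr (h x y), h1, h2]
    simp
  -- B is antisymmetric, so flip-duals equal duals
  have hBanti : ∀ x y : C, B y x = -(B x y) := by
    intro x y
    rw [hB, hB, hherm x y]
    have e : σ (h x y) =
        algebraMap ℚ_[p] E (c₀ (h x y)) + (-(c₁ (h x y))) • π := by
      nth_rewrite 1 [hrepr (h x y)]
      rw [map_add, AlgEquiv.commutes, Algebra.smul_def, map_mul, AlgEquiv.commutes, hσπ,
        ← Algebra.smul_def]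
      simp only [Algebra.smul_def, map_neg]
      ring
    rw [e]
    exact (hcoord _ _).2
  have hflip : ∀ N : Submodule ℤ_[p] C, B.flip.dualSubmodule N = B.dualSubmodule N := by
    intro N
    ext x
    simp only [LinearMap.BilinForm.mem_dualSubmodule, LinearMap.flip_apply]
    constructor
    · intro hx y hy
      have hthis : B y x ∈ (1 : Submodule ℤ_[p] ℚ_[p]) := hx y hy
      rw [hBanti] at hthis
      exact (Submodule.neg_mem_iff _).mp hthis
    · intro hx y hy
      show B y x ∈ (1 : Submodule ℤ_[p] ℚ_[p])
      rw [hBanti]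
      exact (Submodule.neg_mem_iff _).mpr (hx y hy)
  -- biduality
  have bidual : ∀ Λ : Submodule ℤ_[p] C, Λ.FG → Submodule.span ℚ_[p] (Λ : Set C) = ⊤ →
      B.dualSubmodule (B.dualSubmodule Λ) = Λ := by
    intro Λ hfg hfull
    obtain ⟨ι, hι, b, rfl⟩ := aux_lattice_basis p Λ hfg hfull
    haveI := hι
    rw [show B.dualSubmodule (Submodule.span ℤ_[p] (Set.range ⇑b)) =
        B.flip.dualSubmodule (Submodule.span ℤ_[p] (Set.range ⇑b)) from (hflip _).symm]
    exact B.dualSubmodule_dualSubmodule_flip_of_basis hBnd b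
  -- dual of lattice is a lattice
  have hdual_lat : ∀ Λ : Submodule ℤ_[p] C, Λ.FG → Submodule.span ℚ_[p] (Λ : Set C) = ⊤ →
      (B.dualSubmodule Λ).FG ∧ Submodule.span ℚ_[p] ((B.dualSubmodule Λ) : Set C) = ⊤ := by
    intro Λ hfg hfull
    obtain ⟨ι, hι, b, rfl⟩ := aux_lattice_basis p Λ hfg hfull
    haveI := hι
    rw [B.dualSubmodule_span_of_basis hBnd b]
    constructor
    · exact Submodule.fg_span (Set.finite_range _)
    · rw [Submodule.span_span_of_tower]
      exact (B.dualBasis hBnd b).span_eq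
  -- dual of sup is inf of duals
  have hdual_sup : ∀ N₁ N₂ : Submodule ℤ_[p] C,
      B.dualSubmodule (N₁ ⊔ N₂) = B.dualSubmodule N₁ ⊓ B.dualSubmodule N₂ := by
    intro N₁ N₂
    ext x
    simp only [Submodule.mem_inf, LinearMap.BilinForm.mem_dualSubmodule]
    constructor
    · intro hx
      exact ⟨fun y hy => hx y (Submodule.mem_sup_left hy),
        fun y hy => hx y (Submodule.mem_sup_right hy)⟩
    · rintro ⟨hx1, hx2⟩ y hy
      obtain ⟨a, ha, b', hb', rfl⟩ := Submodule.mem_sup.mp hy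
      rw [map_add]
      exact add_mem (hx1 a ha) (hx2 b' hb')
  -- antitonicity of the dual
  have hmono : ∀ N₁ N₂ : Submodule ℤ_[p] C, N₁ ≤ N₂ →
      B.dualSubmodule N₂ ≤ B.dualSubmodule N₁ :=
    fun _ _ hle x hx y hy => hx y (hle hy)
  -- unpack the vertex lattice hypotheses
  obtain ⟨⟨hfg₁, hfull₁, hπΛ₁⟩, hπs₁, hs₁⟩ := h₁
  obtain ⟨⟨hfg₂, hfull₂, hπΛ₂⟩, hπs₂, hs₂⟩ := h₂
  have hsharp₁ : sharpSet p h Λ₁ = (B.dualSubmodule Λ₁ : Set C) := hsharp _ hπΛ₁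
  have hsharp₂ : sharpSet p h Λ₂ = (B.dualSubmodule Λ₂ : Set C) := hsharp _ hπΛ₂
  have hπI : ∀ x ∈ Λ₁ ⊓ Λ₂, π • x ∈ Λ₁ ⊓ Λ₂ := fun x hx =>
    ⟨hπΛ₁ x hx.1, hπΛ₂ x hx.2⟩
  have hsharpI : sharpSet p h (Λ₁ ⊓ Λ₂) = (B.dualSubmodule (Λ₁ ⊓ Λ₂) : Set C) :=
    hsharp _ hπI
  have hS₁ := hdual_lat Λ₁ hfg₁ hfull₁
  have hS₂ := hdual_lat Λ₂ hfg₂ hfull₂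
  have hinter_eq : Λ₁ ⊓ Λ₂ = B.dualSubmodule (B.dualSubmodule Λ₁ ⊔ B.dualSubmodule Λ₂) := by
    rw [hdual_sup, bidual Λ₁ hfg₁ hfull₁, bidual Λ₂ hfg₂ hfull₂]
  have hsupfg : (B.dualSubmodule Λ₁ ⊔ B.dualSubmodule Λ₂).FG := hS₁.1.sup hS₂.1
  have hsupfull :
      Submodule.span ℚ_[p] ((B.dualSubmodule Λ₁ ⊔ B.dualSubmodule Λ₂ : Submodule ℤ_[p] C) : Set C)
        = ⊤ := by
    rw [eq_top_iff, ← hS₁.2]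
    apply Submodule.span_mono
    exact fun x hx => Submodule.mem_sup_left hx
  have hdualI : B.dualSubmodule (Λ₁ ⊓ Λ₂) =
      B.dualSubmodule Λ₁ ⊔ B.dualSubmodule Λ₂ := by
    rw [hinter_eq, bidual _ hsupfg hsupfull]
  -- Part 1
  have part1 : sharpSet p h (Λ₁ ⊓ Λ₂) = sharpSet p h Λ₁ + sharpSet p h Λ₂ := by
    rw [hsharpI, hdualI, Submodule.coe_sup, hsharp₁, hsharp₂]
  -- inclusions sharp Λᵢ ⊆ Λᵢ as submodules
  have hS₁le : B.dualSubmodule Λ₁ ≤ Λ₁ := by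
    intro x hx
    exact hs₁ (by rw [hsharp₁]; exact hx)
  have hS₂le : B.dualSubmodule Λ₂ ≤ Λ₂ := by
    intro x hx
    exact hs₂ (by rw [hsharp₂]; exact hx)
  -- Part 3
  have part3a : sharpSet p h Λ₁ ⊆ (Λ₂ : Set C) → sharpSet p h Λ₂ ⊆ (Λ₁ : Set C) := by
    intro hyp
    rw [hsharp₂]
    have hle : B.dualSubmodule Λ₁ ≤ Λ₂ := by
      intro x hx
      exact hyp (by rw [hsharp₁]; exact hx)
    have : B.dualSubmodule Λ₂ ≤ B.dualSubmodule (B.dualSubmodule Λ₁) := hmono _ _ hle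
    rw [bidual Λ₁ hfg₁ hfull₁] at this
    exact fun x hx => this hx
  have part3b : sharpSet p h Λ₂ ⊆ (Λ₁ : Set C) → sharpSet p h Λ₁ ⊆ (Λ₂ : Set C) := by
    intro hyp
    rw [hsharp₁]
    have hle : B.dualSubmodule Λ₂ ≤ Λ₁ := by
      intro x hx
      exact hyp (by rw [hsharp₂]; exact hx)
    have : B.dualSubmodule Λ₁ ≤ B.dualSubmodule (B.dualSubmodule Λ₂) := hmono _ _ hle
    rw [bidual Λ₂ hfg₂ hfull₂] at this
    exact fun x hx => this hx
  -- sharpSet is antitone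
  have hanti : sharpSet p h Λ₁ ⊆ sharpSet p h (Λ₁ ⊓ Λ₂) := fun x hx y hy => hx y hy.1
  -- Part 2
  have part2f : IsVertexLattice p π h (Λ₁ ⊓ Λ₂) → sharpSet p h Λ₁ ⊆ (Λ₂ : Set C) := by
    intro hVL x hx
    have hx' : x ∈ sharpSet p h (Λ₁ ⊓ Λ₂) := hanti hx
    exact (hVL.2.2 hx').2
  have part2b : sharpSet p h Λ₁ ⊆ (Λ₂ : Set C) → IsVertexLattice p π h (Λ₁ ⊓ Λ₂) := by
    intro hyp
    have hyp' := part3a hyp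
    have hIl := hdual_lat _ hsupfg hsupfull
    refine ⟨⟨?_, ?_, hπI⟩, ?_, ?_⟩
    · rw [hinter_eq]; exact hIl.1
    · rw [hinter_eq]; exact hIl.2
    · intro x hx
      exact hanti (hπs₁ x hx.1)
    · rw [part1]
      rintro z hz
      rw [Set.mem_add] at hz
      obtain ⟨a, ha, b', hb', rfl⟩ := hz
      have ha1 : a ∈ Λ₁ := hs₁ ha
      have ha2 : a ∈ Λ₂ := hyp ha
      have hb1 : b' ∈ Λ₁ := hyp' hb'
      have hb2 : b' ∈ Λ₂ := hs₂ hb'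
      exact add_mem (show a ∈ Λ₁ ⊓ Λ₂ from ⟨ha1, ha2⟩) ⟨hb1, hb2⟩
  exact ⟨part1, ⟨part2f, part2b⟩, ⟨part3a, part3b⟩⟩
end

section
/- Let Λ₁ and Λ₂ be vertex lattices in C. If Λ₁ ∩ Λ₂ is a vertex lattice, then 𝒱_{Λ₁∩Λ₂}(𝔽) = 𝒱_{Λ₁}(𝔽) ∩ 𝒱_{Λ₂}(𝔽); if Λ₁ ∩ Λ₂ is not a vertex lattice, then 𝒱_{Λ₁}(𝔽) ∩ 𝒱_{Λ₂}(𝔽) = ∅. -/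
/- Setup as in the paper: `p` odd, `E/ℚ_p` ramified quadratic with automorphism `σ`, uniformizer
`π` (`σπ = −π`, `π² = π₀` a uniformizer of `ℚ_p`), `C` an `n`-dimensional hermitian `E`-space
(lattices = f.g. full `π`-stable `ℤ_p`-submodules), `⟨x,y⟩ = (1/2)Tr_{E/ℚ_p}(π⁻¹ h x y)`.
`W = W(𝔽)` and `W_ℚ` are modelled as an abstract DVR `A` with fraction field `K`;
`N = C ⊗_{ℚ_p} W_ℚ` carries `ι : C → N`, `τ = id_C ⊗ σK`, the `K`-linear action `Π` of `π`,
the bilinear extension `BN` of `⟨·,·⟩`, and the hermitian extension `HN` with values in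
`Ĕ = K ⊗_{ℚ_p} E` (modelled as `L`, free over `K` with basis `1, π`), characterized by
`HN x y = BN (Πx) y + BN x y · π`; `𝒪_Ĕ = W ⊗ 𝒪_E` is the set of `a + b·π` with `a,b ∈ A`.
`𝒱(𝔽)` is the set of `𝒪_Ĕ`-lattices `M ⊆ N` with `M^♯ = M`, `Πτ(M) ⊆ M ⊆ Π⁻¹τ(M)` and
`length_W((M+τM)/M) ≤ 1`, and `𝒱_Λ(𝔽) = {M ∈ 𝒱(𝔽) : M ⊆ Λ ⊗_{𝒪_E} 𝒪_Ĕ}`. -/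

set_option linter.unusedSectionVars false
section S1
variable {p : ℕ} [Fact p.Prime] {K : Type} [Field K] [Algebra ℚ_[p] K]
  {A : Type} [CommRing A] [IsDomain A] [Algebra A K] [IsFractionRing A K]
  [IsDiscreteValuationRing A]

lemma aux_pK_ne_zero (hpA : Irreducible (p : A)) : algebraMap A K (p : A) ≠ 0 := by
  rw [Ne, IsFractionRing.to_map_eq_zero_iff]
  exact hpA.ne_zero

lemma aux_exists_zpow (hpA : Irreducible (p : A)) (x : K) (hx : x ≠ 0) :
    ∃ (m : ℤ) (u : Aˣ), x = algebraMap A K (p : A) ^ m * algebraMap A K (u : A) := by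
  obtain ⟨a, b, hb, hab⟩ := IsFractionRing.div_surjective (A := A) x
  have hb0 : b ≠ 0 := nonZeroDivisors.ne_zero hb
  have ha0 : a ≠ 0 := by
    rintro rfl
    simp at hab; exact hx hab.symm
  obtain ⟨na, ua, hua⟩ := IsDiscreteValuationRing.eq_unit_mul_pow_irreducible ha0 hpA
  obtain ⟨nb, ub, hub⟩ := IsDiscreteValuationRing.eq_unit_mul_pow_irreducible hb0 hpA
  refine ⟨(na : ℤ) - nb, ua * ub⁻¹, ?_⟩
  have hpK := aux_pK_ne_zero (K := K) hpA
  have hbK : algebraMap A K b ≠ 0 := by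
    rw [Ne, IsFractionRing.to_map_eq_zero_iff]; exact hb0
  have hubK : algebraMap A K (ub : A) ≠ 0 := by
    rw [Ne, IsFractionRing.to_map_eq_zero_iff]; exact ub.ne_zero
  have hinv : algebraMap A K ((ub⁻¹ : Aˣ) : A) = (algebraMap A K (ub : A))⁻¹ := by
    field_simp
    rw [← map_mul]
    simp
  have hval : algebraMap A K ((ua * ub⁻¹ : Aˣ) : A)
      = algebraMap A K (ua : A) * (algebraMap A K (ub : A))⁻¹ := by
    rw [Units.val_mul, map_mul, hinv]
  rw [← hab, hua, hub, map_mul, map_mul, map_pow, map_pow]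
  rw [zpow_sub₀ hpK, zpow_natCast, zpow_natCast, hval]
  field_simp

lemma aux_zpow_unit (hpA : Irreducible (p : A)) (d : ℤ) (w : Aˣ)
    (h : algebraMap A K (p : A) ^ d = algebraMap A K (w : A)) : d = 0 := by
  have hinj : Function.Injective (algebraMap A K) := IsFractionRing.injective A K
  have hpK := aux_pK_ne_zero (K := K) hpA
  rcases le_or_gt 0 d with hd | hd
  · lift d to ℕ using hd
    by_contra hne
    have : algebraMap A K ((p : A) ^ d) = algebraMap A K (w : A) := by
      rw [map_pow]; exact_mod_cast h
    have : (p : A) ^ d = (w : A) := hinj this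
    have : IsUnit ((p : A) ^ d) := this ▸ w.isUnit
    have : IsUnit (p : A) := isUnit_of_dvd_unit (dvd_pow_self _ (by exact_mod_cast hne)) this
    exact hpA.not_isUnit this
  · exfalso
    have hd' : (0:ℤ) < -d := by omega
    set e : ℕ := (-d).toNat with he
    have hde : -d = (e : ℤ) := (Int.toNat_of_nonneg hd'.le).symm
    have h1 : (1 : K) = algebraMap A K (w : A) * algebraMap A K (p : A) ^ e := by
      have := h.symm
      rw [this]
      rw [← zpow_natCast, ← hde, ← zpow_add₀ hpK]
      simp
    have : algebraMap A K (1 : A) = algebraMap A K ((w : A) * (p : A) ^ e) := by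
      rw [map_one, map_mul, map_pow]; exact h1
    have h2 : (1 : A) = (w : A) * (p : A) ^ e := hinj this
    have : IsUnit ((p : A) ^ e) := isUnit_of_mul_isUnit_right (by rw [← h2]; exact isUnit_one)
    have he0 : e ≠ 0 := by omega
    have : IsUnit (p : A) := isUnit_of_dvd_unit (dvd_pow_self _ he0) this
    exact hpA.not_isUnit this

lemma aux_zpow_inj (hpA : Irreducible (p : A)) (m m' : ℤ) (u u' : Aˣ)
    (h : algebraMap A K (p : A) ^ m * algebraMap A K (u : A)
       = algebraMap A K (p : A) ^ m' * algebraMap A K (u' : A)) : m = m' := by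
  have hpK := aux_pK_ne_zero (K := K) hpA
  have huK : algebraMap A K (u : A) ≠ 0 := by
    rw [Ne, IsFractionRing.to_map_eq_zero_iff]; exact u.ne_zero
  have hinv : algebraMap A K ((u⁻¹ : Aˣ) : A) = (algebraMap A K (u : A))⁻¹ := by
    field_simp
    rw [← map_mul]
    simp
  have key : algebraMap A K (p : A) ^ (m - m') = algebraMap A K ((u' * u⁻¹ : Aˣ) : A) := by
    have hval : algebraMap A K ((u' * u⁻¹ : Aˣ) : A)
        = algebraMap A K (u' : A) * (algebraMap A K (u : A))⁻¹ := by
      rw [Units.val_mul, map_mul, hinv]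
    rw [zpow_sub₀ hpK, hval, div_eq_iff (zpow_ne_zero _ hpK)]
    field_simp
    simp only [map_natCast] at h ⊢
    linear_combination h
  have := aux_zpow_unit hpA (m - m') (u' * u⁻¹) key
  omega


lemma aux_map_unit_inv (w : Aˣ) :
    algebraMap A K ((w⁻¹ : Aˣ) : A) = (algebraMap A K (w : A))⁻¹ := by
  refine eq_inv_of_mul_eq_one_left ?_
  rw [← map_mul]
  simp

lemma aux_unit_norm {ℓ : ℕ} (hℓ : ℓ.Prime) (hℓp : ℓ ≠ p) : ‖(ℓ : ℤ_[p])‖ = 1 := by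
  have hp : p.Prime := Fact.out
  have hnd : ¬ ((p:ℤ) ∣ (ℓ:ℤ)) := by
    intro hd
    exact hℓp ((Nat.prime_dvd_prime_iff_eq hp hℓ).mp (Int.ofNat_dvd.mp hd)).symm
  have h1 : ¬ (‖((ℓ:ℤ) : ℤ_[p])‖ < 1) := fun hlt => hnd ((PadicInt.norm_int_lt_one_iff_dvd _).mp hlt)
  have h2 : ((ℓ:ℤ) : ℤ_[p]) = (ℓ : ℤ_[p]) := by push_cast; ring
  rw [h2] at h1
  exact le_antisymm (PadicInt.norm_le_one _) (not_lt.mp h1)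

lemma aux_unit_val (hpA : Irreducible (p : A)) (u : ℤ_[p]ˣ) :
    ∃ w : Aˣ, algebraMap ℚ_[p] K ((u : ℤ_[p]) : ℚ_[p]) = algebraMap A K (w : A) := by
  have hp : p.Prime := Fact.out
  have hu0 : ((u : ℤ_[p]) : ℚ_[p]) ≠ 0 := by
    have h1 : (u : ℤ_[p]) ≠ 0 := u.ne_zero
    exact fun h => h1 (Subtype.ext h)
  have hgx0 : algebraMap ℚ_[p] K ((u : ℤ_[p]) : ℚ_[p]) ≠ 0 := by
    simpa using hu0
  obtain ⟨m, w, hx⟩ := aux_exists_zpow hpA _ hgx0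
  suffices hm : m = 0 by
    subst hm
    exact ⟨w, by simpa using hx⟩
  have key : ∀ ℓ : ℕ, ℓ.Prime → ℓ ≠ p → (ℓ:ℤ) ∣ ((p-1:ℕ):ℤ) * m := by
    intro ℓ hℓ hℓp
    set s : ℤ_[p] := (u : ℤ_[p])^(p-1) with hs_def
    have hs_unit : IsUnit s := u.isUnit.pow _
    have hs1 : ‖s - 1‖ < 1 := by
      have hmap : IsUnit (PadicInt.toZMod (u : ℤ_[p])) := u.isUnit.map _
      have hne : PadicInt.toZMod (u : ℤ_[p]) ≠ 0 := hmap.ne_zero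
      have h1 : PadicInt.toZMod s = 1 := by
        rw [hs_def, map_pow]
        exact ZMod.pow_card_sub_one_eq_one hne
      have hker : s - 1 ∈ RingHom.ker PadicInt.toZMod := by
        simp [RingHom.mem_ker, map_sub, h1]
      rw [PadicInt.ker_toZMod, IsLocalRing.mem_maximalIdeal] at hker
      exact lt_of_le_of_ne (PadicInt.norm_le_one _) (fun hn => hker (PadicInt.isUnit_iff.mpr hn))
    -- Hensel: ℓ-th root of s
    set F : Polynomial ℤ_[p] := Polynomial.X ^ ℓ - Polynomial.C s with hF_def
    have hF1 : F.eval 1 = 1 - s := by simp [hF_def]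
    have hFd : F.derivative.eval 1 = (ℓ : ℤ_[p]) := by
      simp [hF_def, Polynomial.derivative_X_pow]
    have hlt : ‖F.eval 1‖ < ‖F.derivative.eval 1‖ ^ 2 := by
      rw [hF1, hFd, aux_unit_norm hℓ hℓp, one_pow, ← neg_sub, norm_neg]
      exact hs1
    obtain ⟨z, hz, -⟩ := hensels_lemma hlt
    have hzs : z ^ ℓ = s := by
      have := hz
      rw [hF_def] at this
      rw [Polynomial.aeval_def, Polynomial.eval₂_eq_eval_map, Algebra.algebraMap_self, Polynomial.map_id] at this
      simp only [Polynomial.eval_sub, Polynomial.eval_pow, Polynomial.eval_X,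
        Polynomial.eval_C] at this
      exact sub_eq_zero.mp this
    have hsn : ‖s‖ = 1 := PadicInt.isUnit_iff.mp hs_unit
    have hznorm : ‖z‖ = 1 := by
      have hpow : ‖z‖ ^ ℓ = 1 := by
        calc ‖z‖ ^ ℓ = ‖(z:ℚ_[p])‖ ^ ℓ := by rw [PadicInt.norm_def]
        _ = ‖((z:ℚ_[p]))^ℓ‖ := (norm_pow _ _).symm
        _ = ‖((z^ℓ : ℤ_[p]) : ℚ_[p])‖ := by push_cast; ring_nf
        _ = ‖z^ℓ‖ := (PadicInt.norm_def).symm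
        _ = 1 := by rw [hzs, hsn]
      by_contra hne
      have hlt1 : ‖z‖ < 1 := lt_of_le_of_ne (PadicInt.norm_le_one z) hne
      have hc := pow_lt_one₀ (norm_nonneg z) hlt1 hℓ.ne_zero
      rw [hpow] at hc
      exact lt_irrefl _ hc
    have hz0 : ((z : ℚ_[p])) ≠ 0 := by
      intro h0
      rw [PadicInt.norm_def, h0, norm_zero] at hznorm
      norm_num at hznorm
    have hgz0 : algebraMap ℚ_[p] K (z : ℚ_[p]) ≠ 0 := by simpa using hz0
    obtain ⟨mz, wz, hgz⟩ := aux_exists_zpow hpA _ hgz0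
    have hpK := aux_pK_ne_zero (K := K) hpA
    have e1 : algebraMap ℚ_[p] K ((s : ℤ_[p]) : ℚ_[p])
        = algebraMap A K (p : A) ^ (m * ((p-1:ℕ):ℤ)) * algebraMap A K ((w ^ (p-1) : Aˣ) : A) := by
      have hcoe : ((s : ℤ_[p]) : ℚ_[p]) = ((u : ℤ_[p]) : ℚ_[p]) ^ (p-1) := by
        rw [hs_def]; push_cast; ring
      rw [hcoe, map_pow, hx, mul_pow, Units.val_pow_eq_pow_val, map_pow,
        ← zpow_natCast (algebraMap A K (p : A) ^ m) (p-1), ← zpow_mul]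
    have e2 : algebraMap ℚ_[p] K ((s : ℤ_[p]) : ℚ_[p])
        = algebraMap A K (p : A) ^ (mz * (ℓ:ℤ)) * algebraMap A K ((wz ^ ℓ : Aˣ) : A) := by
      have hcoe : ((s : ℤ_[p]) : ℚ_[p]) = ((z : ℚ_[p])) ^ ℓ := by
        rw [← hzs]; push_cast; ring
      rw [hcoe, map_pow, hgz, mul_pow, Units.val_pow_eq_pow_val, map_pow,
        ← zpow_natCast (algebraMap A K (p : A) ^ mz) ℓ, ← zpow_mul]
    have heq := aux_zpow_inj hpA _ _ _ _ (e1.symm.trans e2)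
    exact ⟨mz, by rw [mul_comm ((p-1:ℕ):ℤ) m, heq]; ring⟩
  -- conclude m = 0 from divisibility by infinitely many primes
  by_contra hm0
  have hp1 : ((p-1:ℕ):ℤ) ≠ 0 := by
    have := hp.two_le
    omega
  have hM0 : ((p-1:ℕ):ℤ) * m ≠ 0 := mul_ne_zero hp1 hm0
  obtain ⟨ℓ, hℓge, hℓprime⟩ :=
    Nat.exists_infinite_primes (max (p+1) ((((p-1:ℕ):ℤ) * m).natAbs + 1))
  have hℓp : ℓ ≠ p := by
    have := le_trans (le_max_left _ _) hℓge
    omega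
  have hdvd := key ℓ hℓprime hℓp
  have hdvd' : (ℓ:ℤ) ∣ |((p-1:ℕ):ℤ) * m| := (dvd_abs _ _).mpr hdvd
  have hle := Int.le_of_dvd (abs_pos.mpr hM0) hdvd'
  have habs : |((p-1:ℕ):ℤ) * m| = ((((p-1:ℕ):ℤ) * m).natAbs : ℤ) := Int.abs_eq_natAbs _
  rw [habs] at hle
  have := le_trans (le_max_right _ _) hℓge
  omega

lemma aux_zp_to_A (hpA : Irreducible (p : A)) (z : ℤ_[p]) :
    ∃ a : A, algebraMap ℚ_[p] K (z : ℚ_[p]) = algebraMap A K a := by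
  rcases eq_or_ne z 0 with rfl | hz
  · exact ⟨0, by simp⟩
  obtain ⟨w, hw⟩ := aux_unit_val (K := K) hpA (PadicInt.unitCoeff hz)
  refine ⟨(w : A) * (p : A) ^ (z.valuation), ?_⟩
  have hspec := PadicInt.unitCoeff_spec hz
  have hcoe : (z : ℚ_[p]) = ((PadicInt.unitCoeff hz : ℤ_[p]) : ℚ_[p]) * (p:ℚ_[p]) ^ (z.valuation) := by
    conv_lhs => rw [hspec]
    push_cast
    ring
  rw [hcoe, map_mul, map_pow, hw, map_mul, map_pow]
  congr 1
  simp

lemma aux_A_to_zp (hpA : Irreducible (p : A)) (q : ℚ_[p])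
    (hq : ∃ a : A, algebraMap ℚ_[p] K q = algebraMap A K a) : ‖q‖ ≤ 1 := by
  by_contra hgt
  push_neg at hgt
  have hq0 : q ≠ 0 := by
    rintro rfl
    rw [norm_zero] at hgt
    norm_num at hgt
  obtain ⟨a, ha⟩ := hq
  have ha0 : a ≠ 0 := by
    rintro rfl
    rw [map_zero] at ha
    exact hq0 (by simpa using ha)
  obtain ⟨k, ua, hua⟩ := IsDiscreteValuationRing.eq_unit_mul_pow_irreducible ha0 hpA
  have hzn : ‖q⁻¹‖ ≤ 1 := by
    rw [norm_inv]
    exact inv_le_one_of_one_le₀ hgt.le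
  set z : ℤ_[p] := ⟨q⁻¹, hzn⟩ with hz_def
  have hz0 : z ≠ 0 := by
    intro h0
    apply inv_ne_zero hq0
    exact congrArg Subtype.val h0
  obtain ⟨wz, hwz⟩ := aux_unit_val (K := K) hpA (PadicInt.unitCoeff hz0)
  set j := z.valuation with hj_def
  have hj1 : 1 ≤ j := by
    by_contra hj0
    have hj0' : j = 0 := by omega
    have := PadicInt.unitCoeff_spec hz0
    rw [← hj_def, hj0', pow_zero, mul_one] at this
    have hzu : IsUnit z := this ▸ (PadicInt.unitCoeff hz0).isUnit
    have hzn1 : ‖z‖ = 1 := PadicInt.isUnit_iff.mp hzu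
    have : ‖q⁻¹‖ = 1 := by rw [← hzn1, PadicInt.norm_def]
    rw [norm_inv, inv_eq_one] at this
    rw [this] at hgt
    exact lt_irrefl _ hgt
  -- two decompositions of (algebraMap ℚ_[p] K) q
  have hpK := aux_pK_ne_zero (K := K) hpA
  have e1 : algebraMap ℚ_[p] K q
      = algebraMap A K (p:A) ^ (k:ℤ) * algebraMap A K (ua : A) := by
    rw [ha, hua, map_mul, map_pow, zpow_natCast, mul_comm]
  have hq_inv : (algebraMap ℚ_[p] K q)⁻¹
      = algebraMap A K (p:A) ^ (j:ℤ) * algebraMap A K (wz : A) := by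
    have hcoe : q⁻¹ = ((PadicInt.unitCoeff hz0 : ℤ_[p]) : ℚ_[p]) * (p:ℚ_[p])^j := by
      have hspec := PadicInt.unitCoeff_spec hz0
      have h2 : (z : ℚ_[p]) = q⁻¹ := rfl
      rw [← h2]
      conv_lhs => rw [hspec]
      push_cast
      ring
    rw [← map_inv₀, hcoe, map_mul, map_pow, hwz, zpow_natCast, mul_comm]
    congr 2
    simp
  have e2 : algebraMap ℚ_[p] K q
      = algebraMap A K (p:A) ^ (-(j:ℤ)) * algebraMap A K ((wz⁻¹ : Aˣ) : A) := by
    have h3 := congrArg (·⁻¹) hq_inv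
    simp only [inv_inv] at h3
    rw [h3, mul_inv, ← zpow_neg, aux_map_unit_inv]
  have hkj := aux_zpow_inj hpA _ _ _ _ (e1.symm.trans e2)
  omega

end S1

section S2
variable {p : ℕ} [Fact p.Prime] {E : Type} [Field E] [Algebra ℚ_[p] E] [Algebra ℤ_[p] E]
  [IsScalarTower ℤ_[p] ℚ_[p] E]

lemma aux_int_norm_le (q : ℚ_[p]) (h : IsIntegral ℤ_[p] q) : ‖q‖ ≤ 1 := by
  obtain ⟨y, hy⟩ := IsIntegrallyClosed.isIntegral_iff.mp h
  rw [← hy]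
  have : algebraMap ℤ_[p] ℚ_[p] y = (y : ℚ_[p]) := rfl
  rw [this, ← PadicInt.norm_def]
  exact PadicInt.norm_le_one y

lemma OE_decomp (hp2 : p ≠ 2) [FiniteDimensional ℚ_[p] E]
    (σ : E ≃ₐ[ℚ_[p]] E) (π : E) (hσπ : σ π = -π)
    (hπ : ∃ π₀ : ℚ_[p], algebraMap ℚ_[p] E π₀ = π ^ 2 ∧ ‖π₀‖ = (p : ℝ)⁻¹)
    (hrank : Module.finrank ℚ_[p] E = 2)
    (e : E) (he : e ∈ integralClosure ℤ_[p] E) :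
    ∃ z₁ z₂ : ℤ_[p], e = algebraMap ℚ_[p] E (z₁ : ℚ_[p]) + algebraMap ℚ_[p] E (z₂ : ℚ_[p]) * π := by
  obtain ⟨π₀, hπ₀, hπ₀n⟩ := hπ
  have hp : p.Prime := Fact.out
  have hpR : (1:ℝ) < (p:ℝ) := by exact_mod_cast hp.one_lt
  have hπ₀0 : π₀ ≠ 0 := by
    intro h0
    rw [h0, norm_zero] at hπ₀n
    have h2 : (0:ℝ) < (p:ℝ)⁻¹ := by positivity
    rw [← hπ₀n] at h2
    exact lt_irrefl _ h2
  have hπ0 : π ≠ 0 := by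
    intro h0
    rw [h0] at hπ₀
    rw [zero_pow (by norm_num : (2:ℕ) ≠ 0)] at hπ₀
    exact hπ₀0 ((map_eq_zero _).mp hπ₀)
  have hπnotQ : ∀ q : ℚ_[p], algebraMap ℚ_[p] E q ≠ π := by
    intro q hq
    have h1 : σ π = π := by rw [← hq, AlgEquiv.commutes]
    rw [hσπ] at h1
    have h2 : (2:E) * π = 0 := by linear_combination - h1
    rcases mul_eq_zero.mp h2 with h3 | h3
    · have h4 : algebraMap ℚ_[p] E (2:ℚ_[p]) = (2:E) := map_ofNat _ 2
      rw [← h4, map_eq_zero] at h3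
      norm_num at h3
    · exact hπ0 h3
  have hli : LinearIndependent ℚ_[p] ![1, π] := by
    rw [LinearIndependent.pair_iff]
    intro s t hst
    have hsmul : algebraMap ℚ_[p] E s + algebraMap ℚ_[p] E t * π = 0 := by
      rw [← hst]
      simp [Algebra.smul_def]
    by_cases ht : t = 0
    · subst ht
      simp only [map_zero, zero_mul, add_zero] at hsmul
      exact ⟨(map_eq_zero _).mp hsmul, rfl⟩
    · exfalso
      apply hπnotQ (-s/t)
      have htE : algebraMap ℚ_[p] E t ≠ 0 := by
        rw [Ne, map_eq_zero]; exact ht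
      rw [map_div₀, map_neg, neg_div, neg_eq_iff_eq_neg, div_eq_iff htE]
      linear_combination hsmul
  have hcard : Fintype.card (Fin 2) = Module.finrank ℚ_[p] E := by
    simp [hrank]
  let B2 := basisOfLinearIndependentOfCardEqFinrank hli hcard
  have hB2 : ∀ j, B2 j = ![1, π] j := fun j => by
    simp only [B2, coe_basisOfLinearIndependentOfCardEqFinrank]
  set r0 := B2.repr e 0 with hr0
  set r1 := B2.repr e 1 with hr1
  have hrepr : e = algebraMap ℚ_[p] E r0 + algebraMap ℚ_[p] E r1 * π := by
    conv_lhs => rw [← B2.sum_repr e]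
    rw [Fin.sum_univ_two, hB2 0, hB2 1]
    simp [Algebra.smul_def, ← hr0, ← hr1]
  have hσe : σ e = algebraMap ℚ_[p] E r0 - algebraMap ℚ_[p] E r1 * π := by
    rw [hrepr]
    simp only [map_add, map_mul, AlgEquiv.commutes, hσπ]
    ring
  have heI : IsIntegral ℤ_[p] e := he
  have hσeI : IsIntegral ℤ_[p] (σ e) :=
    IsIntegral.map ((σ : E →ₐ[ℚ_[p]] E).restrictScalars ℤ_[p]) heI
  have hinj : Function.Injective (algebraMap ℚ_[p] E) := (algebraMap ℚ_[p] E).injective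
  have h2r0 : IsIntegral ℤ_[p] (2 * r0) := by
    have hsum : e + σ e = algebraMap ℚ_[p] E (2 * r0) := by
      rw [hσe, hrepr, map_mul]
      have h2c : algebraMap ℚ_[p] E (2:ℚ_[p]) = (2:E) := map_ofNat _ 2
      rw [h2c]
      ring
    have hI := heI.add hσeI
    rw [hsum] at hI
    exact (isIntegral_algebraMap_iff hinj).mp hI
  have h2n : ‖(2:ℚ_[p])‖ = 1 := by
    have hd : ¬ ((p:ℤ) ∣ (2:ℤ)) := by
      intro hd
      have h1 := Int.le_of_dvd (by norm_num) hd
      have h2 := hp.two_le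
      have h3 : p = 2 := by omega
      exact hp2 h3
    have h1 : ¬ (‖((2:ℤ) : ℤ_[p])‖ < 1) := fun hlt => hd ((PadicInt.norm_int_lt_one_iff_dvd _).mp hlt)
    have h2 : ((2:ℤ) : ℤ_[p]) = (2 : ℤ_[p]) := by norm_cast
    rw [h2] at h1
    have h3 : ‖(2:ℤ_[p])‖ = 1 := le_antisymm (PadicInt.norm_le_one _) (not_lt.mp h1)
    have h4 : ((2:ℤ_[p]) : ℚ_[p]) = (2:ℚ_[p]) := by norm_cast
    rw [PadicInt.norm_def, h4] at h3
    exact h3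
  have hr0n : ‖r0‖ ≤ 1 := by
    have h1 := aux_int_norm_le _ h2r0
    rw [norm_mul, h2n, one_mul] at h1
    exact h1
  have hr0I : IsIntegral ℤ_[p] (algebraMap ℚ_[p] E r0) := by
    have heq : algebraMap ℚ_[p] E r0 = algebraMap ℤ_[p] E (⟨r0, hr0n⟩ : ℤ_[p]) := by
      exact (IsScalarTower.algebraMap_apply ℤ_[p] ℚ_[p] E (⟨r0, hr0n⟩ : ℤ_[p])).symm
    rw [heq]
    exact isIntegral_algebraMap
  have hr1I : IsIntegral ℤ_[p] (r1 * r1 * π₀) := by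
    have hg : IsIntegral ℤ_[p] (algebraMap ℚ_[p] E r1 * π) := by
      have hsub : e - algebraMap ℚ_[p] E r0 = algebraMap ℚ_[p] E r1 * π := by
        rw [hrepr]; ring
      rw [← hsub]
      exact heI.sub hr0I
    have hsq : (algebraMap ℚ_[p] E r1 * π) * (algebraMap ℚ_[p] E r1 * π)
        = algebraMap ℚ_[p] E (r1 * r1 * π₀) := by
      rw [map_mul, map_mul, hπ₀]
      ring
    have hI := hg.mul hg
    rw [hsq] at hI
    exact (isIntegral_algebraMap_iff hinj).mp hI
  have hr1n : ‖r1‖ ≤ 1 := by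
    have h1 := aux_int_norm_le _ hr1I
    rw [norm_mul, norm_mul, hπ₀n] at h1
    by_contra hgt
    push_neg at hgt
    have hr10 : r1 ≠ 0 := by
      intro h0; rw [h0, norm_zero] at hgt; norm_num at hgt
    have hval := Padic.norm_eq_zpow_neg_valuation hr10
    have hge : (p:ℝ) ≤ ‖r1‖ := by
      rw [hval] at hgt ⊢
      have h2 : (0:ℤ) < -r1.valuation := by
        by_contra h3
        push_neg at h3
        have h4 : ((p:ℝ) ^ (-r1.valuation) : ℝ) ≤ 1 :=
          zpow_le_one_of_nonpos₀ hpR.le h3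
        linarith
      calc (p:ℝ) = (p:ℝ) ^ (1:ℤ) := by simp
      _ ≤ (p:ℝ) ^ (-r1.valuation) := by
        apply zpow_le_zpow_right₀ hpR.le
        omega
    have hp0 : (0:ℝ) < (p:ℝ) := by positivity
    have : (p:ℝ) * (p:ℝ) * (p:ℝ)⁻¹ ≤ ‖r1‖ * ‖r1‖ * (p:ℝ)⁻¹ := by
      apply mul_le_mul_of_nonneg_right _ (by positivity)
      nlinarith
    rw [mul_inv_cancel_right₀ (ne_of_gt hp0)] at this
    nlinarith
  exact ⟨⟨r0, hr0n⟩, ⟨r1, hr1n⟩, by rw [hrepr]⟩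

end S2


variable (p : ℕ) [Fact p.Prime]
variable {E : Type} [Field E] [Algebra ℚ_[p] E] [Algebra ℤ_[p] E] [IsScalarTower ℤ_[p] ℚ_[p] E]
variable {C : Type} [AddCommGroup C] [Module E C] [Module ℚ_[p] C] [Module ℤ_[p] C]
  [IsScalarTower ℚ_[p] E C] [IsScalarTower ℤ_[p] E C] [IsScalarTower ℤ_[p] ℚ_[p] C]

/- STATEMENT 12: For vertex lattices Λ₁, Λ₂ in C: if Λ₁ ∩ Λ₂ is a vertex lattice then
`𝒱_{Λ₁∩Λ₂}(𝔽) = 𝒱_{Λ₁}(𝔽) ∩ 𝒱_{Λ₂}(𝔽)`; otherwise `𝒱_{Λ₁}(𝔽) ∩ 𝒱_{Λ₂}(𝔽) = ∅`. -/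
theorem statement12
    (hp2 : p ≠ 2)
    [FiniteDimensional ℚ_[p] E]
    (σ : E ≃ₐ[ℚ_[p]] E) (π : E) (hσπ : σ π = -π)
    (hπ : ∃ π₀ : ℚ_[p], algebraMap ℚ_[p] E π₀ = π ^ 2 ∧ ‖π₀‖ = (p : ℝ)⁻¹)
    (hrank : Module.finrank ℚ_[p] E = 2)
    (n : ℕ) (hn : Module.finrank E C = n)
    (h : C → C → E)
    (haddl : ∀ x x' y, h (x + x') y = h x y + h x' y)
    (hsmull : ∀ (a : E) (x y : C), h (a • x) y = a * h x y)
    (hherm : ∀ x y, h y x = σ (h x y))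
    (hnd : ∀ x, (∀ y, h x y = 0) → x = 0)
    -- W and W_ℚ with Frobenius σK preserving W, with fixed field ℚ_p
    (K : Type) [Field K] [Algebra ℚ_[p] K]
    (A : Type) [CommRing A] [IsDomain A] [Algebra A K] [IsFractionRing A K]
    [IsDiscreteValuationRing A]
    (hpA : Irreducible (p : A))
    (σK : K ≃ₐ[ℚ_[p]] K)
    (hσA : ∀ a : A, ∃ a' : A, σK (algebraMap A K a) = algebraMap A K a')
    (hKfix : ∀ a : K, σK a = a → ∃ q : ℚ_[p], a = algebraMap ℚ_[p] K q)
    -- N = C ⊗_{ℚ_p} W_ℚ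
    (N : Type) [AddCommGroup N] [Module K N] [Module A N] [IsScalarTower A K N]
    [Module ℚ_[p] N] [IsScalarTower ℚ_[p] K N]
    (ι : C →ₗ[ℚ_[p]] N)
    (bC : Module.Basis (Fin (2 * n)) ℚ_[p] C) (bN : Module.Basis (Fin (2 * n)) K N)
    (hb : ∀ j, bN j = ι (bC j))
    -- τ = id_C ⊗ σK; its fixed points are exactly ι(C)
    (τ : N ≃+ N) (hτsl : ∀ (c : K) (x : N), τ (c • x) = σK c • τ x)
    (hτι : ∀ v : C, τ (ι v) = ι v)
    (hτfix : ∀ x : N, τ x = x → ∃ v : C, x = ι v)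
    -- Frobenius descent: a τ-stable W-lattice is spanned by its τ-invariants
    (hdesc : ∀ T : Submodule A N, Submodule.span A (τ '' (T : Set N)) = T →
      Submodule.span A (ι '' {v : C | ι v ∈ T}) = T)
    -- the action Π of π on N
    (Pn : N →ₗ[K] N) (hPι : ∀ v : C, Pn (ι v) = ι (π • v))
    -- the bilinear extension BN of ⟨·,·⟩
    (BN : LinearMap.BilinForm K N)
    (hBι : ∀ v w : C, BN (ι v) (ι w)
      = algebraMap ℚ_[p] K (2⁻¹ * Algebra.trace ℚ_[p] E (π⁻¹ * h v w)))
    (halt : ∀ x, BN x x = 0)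
    (hskew : ∀ x y, BN (Pn x) y = - BN x (Pn y))
    -- Ĕ = W_ℚ ⊗_{ℚ_p} E and the hermitian extension HN of h
    (L : Type) [CommRing L] [Algebra K L] [Algebra E L]
    [Algebra ℚ_[p] L] [IsScalarTower ℚ_[p] K L] [IsScalarTower ℚ_[p] E L]
    (hLbasis : ∀ z : L, ∃! ab : K × K,
      z = algebraMap K L ab.1 + algebraMap K L ab.2 * algebraMap E L π)
    (HN : N → N → L)
    (hHι : ∀ v w : C, HN (ι v) (ι w) = algebraMap E L (h v w))
    (hHN : ∀ x y : N, HN x y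
      = algebraMap K L (BN (Pn x) y) + algebraMap K L (BN x y) * algebraMap E L π)
    -- the set 𝒱(𝔽) of selfdual 𝒪_Ĕ-lattices M with Πτ(M) ⊆ M ⊆ Π⁻¹τ(M)
    -- and length((M+τM)/M) ≤ 1
    (VF : Set (Submodule A N))
    (hVF : VF = {M : Submodule A N | M.FG ∧ Submodule.span K (M : Set N) = ⊤ ∧
      (M : Set N) = {x | ∀ y ∈ M, ∃ a b : A, HN x y
        = algebraMap K L (algebraMap A K a)
          + algebraMap K L (algebraMap A K b) * algebraMap E L π} ∧
      (∀ x ∈ M, Pn (τ x) ∈ M) ∧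
      (∀ x ∈ M, ∃ y ∈ M, Pn x = τ y) ∧
      (M = M ⊔ Submodule.span A (τ '' (M : Set N)) ∨
        M ⋖ M ⊔ Submodule.span A (τ '' (M : Set N)))})
    -- the strata 𝒱_Λ(𝔽) = {M ∈ 𝒱(𝔽) : M ⊆ Λ ⊗_{𝒪_E} 𝒪_Ĕ}
    (VL : Submodule ℤ_[p] C → Set (Submodule A N))
    (hVL : ∀ Λ : Submodule ℤ_[p] C,
      VL Λ = {M ∈ VF | M ≤ Submodule.span A (ι '' (Λ : Set C))})
    -- Λ₁, Λ₂ vertex lattices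
    (Λ₁ Λ₂ : Submodule ℤ_[p] C)
    (h₁ : IsVertexLattice p π h Λ₁) (h₂ : IsVertexLattice p π h Λ₂) :
    (IsVertexLattice p π h (Λ₁ ⊓ Λ₂) → VL (Λ₁ ⊓ Λ₂) = VL Λ₁ ∩ VL Λ₂) ∧
    (¬ IsVertexLattice p π h (Λ₁ ⊓ Λ₂) → VL Λ₁ ∩ VL Λ₂ = ∅) := by
  classical
  have hp : p.Prime := Fact.out
  have hpR : (1:ℝ) < (p:ℝ) := by exact_mod_cast hp.one_lt
  haveI hnzC : NoZeroSMulDivisors ℤ_[p] C := by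
    refine ⟨fun {z x} hzx => ?_⟩
    by_cases hz : z = 0
    · exact Or.inl hz
    · right
      have h1 : algebraMap ℤ_[p] ℚ_[p] z • x = 0 := by
        rw [algebraMap_smul]; exact hzx
      have h2 : algebraMap ℤ_[p] ℚ_[p] z ≠ 0 := by
        intro h0
        apply hz
        rw [PadicInt.algebraMap_apply] at h0
        exact Subtype.ext h0
      rcases smul_eq_zero.mp h1 with h3 | h3
      · exact absurd h3 h2
      · exact h3
  have hbasisΛ : ∀ Λ : Submodule ℤ_[p] C, Λ.FG → Submodule.span ℚ_[p] (Λ : Set C) = ⊤ →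
      ∃ B : Module.Basis (Fin (2*n)) ℚ_[p] C, Submodule.span ℤ_[p] (Set.range ⇑B) = Λ := by
    intro Λ hFG hfull
    haveI : Module.Finite ℤ_[p] Λ := Module.Finite.iff_fg.mpr hFG
    haveI : Module.Free ℤ_[p] Λ := Module.free_of_finite_type_torsion_free'
    set e := Module.Free.chooseBasis ℤ_[p] Λ with he_def
    set v : Module.Free.ChooseBasisIndex ℤ_[p] Λ → C := (⇑Λ.subtype) ∘ ⇑e with hv_def
    have hliZ : LinearIndependent ℤ_[p] v :=
      e.linearIndependent.map' Λ.subtype (Submodule.ker_subtype Λ)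
    have hvmem : ∀ i, v i ∈ Λ := fun i => (e i).2
    have hrep : ∀ x ∈ Λ, ∃ z : Module.Free.ChooseBasisIndex ℤ_[p] Λ → ℤ_[p],
        x = ∑ j, z j • v j := by
      intro x hx
      refine ⟨fun j => e.repr ⟨x, hx⟩ j, ?_⟩
      have h1 : (⟨x, hx⟩ : Λ) = ∑ j, e.repr ⟨x, hx⟩ j • e j := (e.sum_repr _).symm
      have h2 := congrArg Λ.subtype h1
      rw [map_sum] at h2
      simpa [hv_def] using h2
    have hliQ : LinearIndependent ℚ_[p] v := by
      rw [Fintype.linearIndependent_iff]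
      intro gc hsum
      have hb : ∀ j, ∃ k : ℕ, ‖gc j‖ ≤ (p:ℝ) ^ k := by
        intro j
        obtain ⟨k, hk⟩ := pow_unbounded_of_one_lt (R := ℝ) ‖gc j‖ hpR
        exact ⟨k, hk.le⟩
      choose kk hkk using hb
      set m := Finset.univ.sup kk with hm
      have hppos : (0:ℝ) < (p:ℝ) := lt_trans one_pos hpR
      have hbound : ∀ j, ‖gc j * (p:ℚ_[p]) ^ m‖ ≤ 1 := by
        intro j
        rw [norm_mul, norm_pow, Padic.norm_p]
        have h1 : ‖gc j‖ ≤ (p:ℝ) ^ m :=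
          le_trans (hkk j) (pow_le_pow_right₀ hpR.le (Finset.le_sup (Finset.mem_univ j)))
        calc ‖gc j‖ * ((p:ℝ)⁻¹) ^ m ≤ (p:ℝ) ^ m * ((p:ℝ)⁻¹) ^ m :=
              mul_le_mul_of_nonneg_right h1 (by positivity)
        _ = 1 := by rw [← mul_pow, mul_inv_cancel₀ (ne_of_gt hppos), one_pow]
      set zc : Module.Free.ChooseBasisIndex ℤ_[p] Λ → ℤ_[p] :=
        fun j => ⟨gc j * (p:ℚ_[p]) ^ m, hbound j⟩ with hzc
      have hzsum : ∑ j, zc j • v j = 0 := by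
        have h1 : ∑ j, zc j • v j = (p:ℚ_[p]) ^ m • ∑ j, gc j • v j := by
          rw [Finset.smul_sum]
          refine Finset.sum_congr rfl fun j _ => ?_
          rw [← algebraMap_smul ℚ_[p] (zc j) (v j), PadicInt.algebraMap_apply]
          show (gc j * (p:ℚ_[p]) ^ m) • v j = _
          rw [smul_smul, mul_comm]
        rw [h1, hsum, smul_zero]
      have hz0 := Fintype.linearIndependent_iff.mp hliZ zc hzsum
      intro j
      have h2 : gc j * (p:ℚ_[p]) ^ m = 0 := congrArg Subtype.val (hz0 j)
      rcases mul_eq_zero.mp h2 with h3 | h3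
      · exact h3
      · exfalso
        apply pow_ne_zero m (show (p:ℚ_[p]) ≠ 0 by exact_mod_cast hp.ne_zero) h3
    have hspanQ : ⊤ ≤ Submodule.span ℚ_[p] (Set.range v) := by
      rw [← hfull, Submodule.span_le]
      intro x hx
      obtain ⟨z, hz⟩ := hrep x hx
      rw [hz]
      refine Submodule.sum_mem _ fun j _ => ?_
      rw [← algebraMap_smul ℚ_[p] (z j) (v j)]
      exact Submodule.smul_mem _ _ (Submodule.subset_span ⟨j, rfl⟩)
    set B0 : Module.Basis (Module.Free.ChooseBasisIndex ℤ_[p] Λ) ℚ_[p] C := Module.Basis.mk hliQ hspanQ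
    have hB0 : ⇑B0 = v := Module.Basis.coe_mk _ _
    have hspanZ : Submodule.span ℤ_[p] (Set.range v) = Λ := by
      apply le_antisymm
      · rw [Submodule.span_le]
        rintro _ ⟨j, rfl⟩
        exact hvmem j
      · intro x hx
        obtain ⟨z, hz⟩ := hrep x hx
        rw [hz]
        exact Submodule.sum_mem _ fun j _ =>
          Submodule.smul_mem _ _ (Submodule.subset_span ⟨j, rfl⟩)
    refine ⟨B0.reindex (B0.indexEquiv bC), ?_⟩
    rw [Module.Basis.range_reindex, hB0, hspanZ]
  have hNbasis : ∀ B : Module.Basis (Fin (2*n)) ℚ_[p] C,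
      ∃ bb : Module.Basis (Fin (2*n)) K N, ∀ j, bb j = ι (B j) := by
    intro B
    set P : Matrix (Fin (2*n)) (Fin (2*n)) ℚ_[p] := bC.toMatrix ⇑B with hP
    haveI hinvP : Invertible P := bC.invertibleToMatrix B
    set PK : Matrix (Fin (2*n)) (Fin (2*n)) K := P.map (algebraMap ℚ_[p] K) with hPK
    haveI hinvPK : Invertible PK := by
      have h1 := Invertible.map ((algebraMap ℚ_[p] K).mapMatrix
        (m := Fin (2*n))).toMonoidHom P
      simpa [RingHom.mapMatrix_apply] using h1
    set Φ : N →ₗ[K] N := Matrix.toLin bN bN PK with hΦ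
    set Ψ : N →ₗ[K] N := Matrix.toLin bN bN (⅟PK) with hΨ
    have hΦΨ : Φ ∘ₗ Ψ = LinearMap.id := by
      rw [hΦ, hΨ, ← Matrix.toLin_mul bN bN bN, mul_invOf_self, Matrix.toLin_one]
    have hΨΦ : Ψ ∘ₗ Φ = LinearMap.id := by
      rw [hΦ, hΨ, ← Matrix.toLin_mul bN bN bN, invOf_mul_self, Matrix.toLin_one]
    set eqv : N ≃ₗ[K] N := LinearEquiv.ofLinear Φ Ψ hΦΨ hΨΦ with heqv
    refine ⟨bN.map eqv, fun j => ?_⟩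
    rw [Module.Basis.map_apply]
    show Φ (bN j) = ι (B j)
    rw [hΦ, Matrix.toLin_self]
    calc ∑ i, PK i j • bN i = ∑ i, (bC.repr (B j) i) • ι (bC i) := by
          refine Finset.sum_congr rfl fun i _ => ?_
          rw [hb i, hPK, Matrix.map_apply, hP, Module.Basis.toMatrix_apply, algebraMap_smul]
    _ = ι (∑ i, bC.repr (B j) i • bC i) := by
          rw [map_sum]
          exact Finset.sum_congr rfl fun i _ => (map_smul ι _ _).symm
    _ = ι (B j) := by rw [Module.Basis.sum_repr]
  haveI hnzAK : NoZeroSMulDivisors A K := by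
    refine ⟨fun {a k} hak => ?_⟩
    rw [Algebra.smul_def] at hak
    rcases mul_eq_zero.mp hak with h3 | h3
    · exact Or.inl (IsFractionRing.to_map_eq_zero_iff.mp h3)
    · exact Or.inr h3
  have hspanA_eq : ∀ (Λ : Submodule ℤ_[p] C) (B : Module.Basis (Fin (2*n)) ℚ_[p] C),
      Submodule.span ℤ_[p] (Set.range ⇑B) = Λ →
      ∀ (bb : Module.Basis (Fin (2*n)) K N), (∀ j, bb j = ι (B j)) →
      Submodule.span A (ι '' (Λ : Set C)) = Submodule.span A (Set.range ⇑bb) := by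
    intro Λ B hBspan bb hbb
    apply le_antisymm
    · rw [Submodule.span_le]
      rintro _ ⟨x, hx, rfl⟩
      rw [← hBspan] at hx
      refine Submodule.span_induction ?_ ?_ ?_ ?_ hx
      · rintro _ ⟨j, rfl⟩
        exact Submodule.subset_span ⟨j, hbb j⟩
      · rw [map_zero]
        exact Submodule.zero_mem _
      · intro y z _ _ hy hz
        rw [map_add]
        exact Submodule.add_mem _ hy hz
      · intro z x _ hx
        have h1 : ι (z • x) = algebraMap ℚ_[p] K ((z:ℚ_[p])) • ι x := by
          have e1 : z • x = ((z:ℚ_[p])) • x := by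
            rw [← PadicInt.algebraMap_apply, algebraMap_smul]
          rw [e1, map_smul, ← algebraMap_smul K ((z:ℚ_[p])) (ι x)]
        obtain ⟨a, ha⟩ := aux_zp_to_A (K := K) hpA z
        rw [h1, ha, algebraMap_smul]
        exact Submodule.smul_mem _ a hx
    · rw [Submodule.span_le]
      rintro _ ⟨j, rfl⟩
      rw [hbb j]
      refine Submodule.subset_span ⟨B j, ?_, rfl⟩
      rw [← hBspan]
      exact Submodule.subset_span ⟨j, rfl⟩
  have hdescΛ : ∀ Λ : Submodule ℤ_[p] C, Λ.FG → Submodule.span ℚ_[p] (Λ : Set C) = ⊤ →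
      ∀ v : C, ι v ∈ Submodule.span A (ι '' (Λ : Set C)) → v ∈ Λ := by
    intro Λ hFG hfull v hv
    obtain ⟨B, hBspan⟩ := hbasisΛ Λ hFG hfull
    obtain ⟨bb, hbb⟩ := hNbasis B
    rw [hspanA_eq Λ B hBspan bb hbb] at hv
    have hcoords := (Module.Basis.mem_span_iff_repr_mem A bb (ι v)).mp hv
    have hrepr : ∀ j, bb.repr (ι v) j = algebraMap ℚ_[p] K (B.repr v j) := by
      have h2 : ι v = ∑ j, algebraMap ℚ_[p] K (B.repr v j) • bb j := by
        conv_lhs => rw [← B.sum_repr v]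
        rw [map_sum]
        refine Finset.sum_congr rfl fun j _ => ?_
        rw [map_smul, hbb j, algebraMap_smul]
      intro j
      rw [h2, Module.Basis.repr_sum_self]
    have hnorm : ∀ j, ‖B.repr v j‖ ≤ 1 := by
      intro j
      obtain ⟨a, ha⟩ := hcoords j
      refine aux_A_to_zp (K := K) hpA _ ⟨a, ?_⟩
      rw [← hrepr j, ← ha]
    rw [← hBspan]
    have hzf : ∀ j, ∃ z : ℤ_[p], (z : ℚ_[p]) = B.repr v j := fun j => ⟨⟨_, hnorm j⟩, rfl⟩
    choose zf hzfs using hzf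
    have h3 : v = ∑ j, zf j • B j := by
      conv_lhs => rw [← B.sum_repr v]
      refine Finset.sum_congr rfl fun j _ => ?_
      rw [← algebraMap_smul ℚ_[p] (zf j) (B j), PadicInt.algebraMap_apply, hzfs j]
    rw [h3]
    exact Submodule.sum_mem _ fun j _ =>
      Submodule.smul_mem _ _ (Submodule.subset_span ⟨j, rfl⟩)
  have hstabτ : ∀ (s : Set C), ∀ x ∈ Submodule.span A (ι '' s),
      τ x ∈ Submodule.span A (ι '' s) := by
    intro s x hx
    refine Submodule.span_induction ?_ ?_ ?_ ?_ hx
    · rintro _ ⟨v, hv, rfl⟩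
      rw [hτι v]
      exact Submodule.subset_span ⟨v, hv, rfl⟩
    · rw [map_zero]
      exact Submodule.zero_mem _
    · intro y z _ _ hy hz
      rw [map_add]
      exact Submodule.add_mem _ hy hz
    · intro a y _ hy
      have h1 : a • y = algebraMap A K a • y := (algebraMap_smul K a y).symm
      obtain ⟨a', ha'⟩ := hσA a
      rw [h1, hτsl, ha', algebraMap_smul]
      exact Submodule.smul_mem _ a' hy
  have hτsymm_smul : ∀ (c : K) (x : N), τ.symm (c • x) = σK.symm c • τ.symm x := by
    intro c x
    apply τ.injective
    rw [τ.apply_symm_apply, hτsl, AlgEquiv.apply_symm_apply, τ.apply_symm_apply]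
  have hσAinv : ∀ a : A, ∃ a' : A, σK.symm (algebraMap A K a) = algebraMap A K a' := by
    intro a
    rcases eq_or_ne a 0 with rfl | ha0
    · exact ⟨0, by simp⟩
    obtain ⟨k, ua, hua⟩ := IsDiscreteValuationRing.eq_unit_mul_pow_irreducible ha0 hpA
    have hunit : ∀ w : Aˣ, ∃ w' : A, σK.symm (algebraMap A K (w : A)) = algebraMap A K w' := by
      intro w
      have hw0 : σK.symm (algebraMap A K (w : A)) ≠ 0 := by
        rw [Ne, map_eq_zero_iff _ σK.symm.injective, IsFractionRing.to_map_eq_zero_iff]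
        exact w.ne_zero
      obtain ⟨m, wm, hwm⟩ := aux_exists_zpow hpA _ hw0
      -- apply σK to hwm
      have happ : algebraMap A K (w : A)
          = algebraMap A K (p : A) ^ m * σK (algebraMap A K (wm : A)) := by
        have := congrArg σK hwm
        rw [AlgEquiv.apply_symm_apply, map_mul, map_zpow₀] at this
        have hpfix : σK (algebraMap A K (p : A)) = algebraMap A K (p : A) := by
          rw [map_natCast, map_natCast]
        rw [hpfix] at this
        exact this
      obtain ⟨w1, hw1⟩ := hσA (wm : A)
      obtain ⟨w2, hw2⟩ := hσA ((wm⁻¹ : Aˣ) : A)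
      have hw12 : w1 * w2 = 1 := by
        apply IsFractionRing.injective A K
        rw [map_mul, map_one, ← hw1, ← hw2, ← map_mul, ← map_mul]
        simp
      have hw1u : IsUnit w1 := IsUnit.of_mul_eq_one _ hw12
      have hm0 : m = 0 := by
        have he : algebraMap A K (p : A) ^ (0:ℤ) * algebraMap A K (w : A)
            = algebraMap A K (p : A) ^ m * algebraMap A K (hw1u.unit : A) := by
          rw [zpow_zero, one_mul, happ, hw1]
          rfl
        exact (aux_zpow_inj hpA _ _ _ _ he).symm
      refine ⟨(wm : A), ?_⟩
      rw [hwm, hm0, zpow_zero, one_mul]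
    obtain ⟨w', hw'⟩ := hunit ua
    refine ⟨w' * (p : A) ^ k, ?_⟩
    have hppow : algebraMap A K ((p:A) ^ k) = ((p:K)) ^ k := by
      rw [map_pow, map_natCast]
    have hsplit : σK.symm (algebraMap A K a)
        = σK.symm (algebraMap A K (ua : A)) * σK.symm (algebraMap A K ((p:A)^k)) := by
      rw [← map_mul, ← map_mul, ← hua]
    have hfix : σK.symm (algebraMap A K ((p:A)^k)) = ((p:K))^k := by
      rw [hppow, map_pow, map_natCast]
    rw [hsplit, hw', hfix, map_mul, hppow]
  have hstabτ' : ∀ (s : Set C), ∀ x ∈ Submodule.span A (ι '' s),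
      τ.symm x ∈ Submodule.span A (ι '' s) := by
    intro s x hx
    refine Submodule.span_induction ?_ ?_ ?_ ?_ hx
    · rintro _ ⟨v, hv, rfl⟩
      have h1 : τ.symm (ι v) = ι v := by
        apply τ.injective
        rw [τ.apply_symm_apply, hτι]
      rw [h1]
      exact Submodule.subset_span ⟨v, hv, rfl⟩
    · rw [map_zero]
      exact Submodule.zero_mem _
    · intro y z _ _ hy hz
      rw [map_add]
      exact Submodule.add_mem _ hy hz
    · intro a y _ hy
      have h1 : a • y = algebraMap A K a • y := (algebraMap_smul K a y).symm
      obtain ⟨a', ha'⟩ := hσAinv a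
      rw [h1, hτsymm_smul, ha', algebraMap_smul]
      exact Submodule.smul_mem _ a' hy
  have hinfle : Submodule.span A (ι '' (Λ₁ : Set C)) ⊓ Submodule.span A (ι '' (Λ₂ : Set C))
      ≤ Submodule.span A (ι '' ((Λ₁ ⊓ Λ₂ : Submodule ℤ_[p] C) : Set C)) := by
    set T := Submodule.span A (ι '' (Λ₁ : Set C)) ⊓ Submodule.span A (ι '' (Λ₂ : Set C)) with hT
    have hfixT : Submodule.span A (τ '' (T : Set N)) = T := by
      apply le_antisymm
      · rw [Submodule.span_le]
        rintro _ ⟨x, hx, rfl⟩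
        exact ⟨hstabτ _ x hx.1, hstabτ _ x hx.2⟩
      · intro x hx
        have h1 : τ.symm x ∈ T := ⟨hstabτ' _ x hx.1, hstabτ' _ x hx.2⟩
        have h2 : x = τ (τ.symm x) := (τ.apply_symm_apply x).symm
        rw [h2]
        exact Submodule.subset_span ⟨τ.symm x, h1, rfl⟩
    have hdescT := hdesc T hfixT
    rw [← hdescT]
    apply Submodule.span_mono
    apply Set.image_mono
    intro v hv
    have hv1 : ι v ∈ Submodule.span A (ι '' (Λ₁ : Set C)) := hv.1
    have hv2 : ι v ∈ Submodule.span A (ι '' (Λ₂ : Set C)) := hv.2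
    exact Submodule.mem_inf.mpr
      ⟨hdescΛ Λ₁ h₁.1.1 h₁.1.2.1 v hv1, hdescΛ Λ₂ h₂.1.1 h₂.1.2.1 v hv2⟩
  constructor
  · intro _
    ext M
    rw [hVL, hVL, hVL]
    simp only [Set.mem_setOf_eq, Set.mem_inter_iff]
    constructor
    · rintro ⟨hMVF, hMle⟩
      refine ⟨⟨hMVF, le_trans hMle (Submodule.span_mono (Set.image_mono ?_))⟩,
              ⟨hMVF, le_trans hMle (Submodule.span_mono (Set.image_mono ?_))⟩⟩
      · exact fun x hx => (Submodule.mem_inf.mp hx).1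
      · exact fun x hx => (Submodule.mem_inf.mp hx).2
    · rintro ⟨⟨hMVF, hle1⟩, ⟨-, hle2⟩⟩
      exact ⟨hMVF, le_trans (le_inf hle1 hle2) hinfle⟩
  · intro hnv
    rw [Set.eq_empty_iff_forall_notMem]
    rintro M ⟨hM1, hM2⟩
    rw [hVL] at hM1 hM2
    obtain ⟨hMVF, hle1⟩ := hM1
    obtain ⟨-, hle2⟩ := hM2
    apply hnv
    have hpQ : (p:ℚ_[p]) ≠ 0 := by exact_mod_cast hp.ne_zero
    have haux : ∀ (Λ : Submodule ℤ_[p] C) (k : ℕ) (z : C), z ∈ Λ → (p:ℚ_[p])^k • z ∈ Λ := by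
      intro Λ k z hz
      have h1 : (p:ℚ_[p])^k • z = ((p:ℤ_[p])^k : ℤ_[p]) • z := by
        rw [← algebraMap_smul ℚ_[p] ((p:ℤ_[p])^k : ℤ_[p]) z, PadicInt.algebraMap_apply]
        push_cast
        ring_nf
      rw [h1]
      exact Submodule.smul_mem _ _ hz
    have hshrink : ∀ (Λ : Submodule ℤ_[p] C), Submodule.span ℚ_[p] (Λ : Set C) = ⊤ →
        ∀ x : C, ∃ m : ℕ, (p:ℚ_[p])^m • x ∈ Λ := by
      intro Λ hfull x
      have hx : x ∈ Submodule.span ℚ_[p] (Λ : Set C) := by rw [hfull]; trivial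
      refine Submodule.span_induction ?_ ?_ ?_ ?_ hx
      · intro y hy
        exact ⟨0, by simpa using hy⟩
      · exact ⟨0, by simp⟩
      · rintro y z _ _ ⟨my, hmy⟩ ⟨mz, hmz⟩
        refine ⟨my + mz, ?_⟩
        rw [smul_add, pow_add]
        rw [mul_smul, mul_smul]
        refine Submodule.add_mem _ ?_ ?_
        · rw [← mul_smul, mul_comm, mul_smul]
          exact haux Λ mz _ hmy
        · exact haux Λ my _ hmz
      · rintro q y _ ⟨m, hm⟩
        obtain ⟨k, hk⟩ := pow_unbounded_of_one_lt (R := ℝ) ‖q‖ hpR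
        have hbound : ‖q * (p:ℚ_[p])^k‖ ≤ 1 := by
          rw [norm_mul, norm_pow, Padic.norm_p]
          have hppos : (0:ℝ) < (p:ℝ) := lt_trans one_pos hpR
          calc ‖q‖ * ((p:ℝ)⁻¹)^k ≤ (p:ℝ)^k * ((p:ℝ)⁻¹)^k :=
                mul_le_mul_of_nonneg_right hk.le (by positivity)
          _ = 1 := by rw [← mul_pow, mul_inv_cancel₀ (ne_of_gt hppos), one_pow]
        obtain ⟨zq, hzq⟩ : ∃ z : ℤ_[p], (z : ℚ_[p]) = q * (p:ℚ_[p])^k := ⟨⟨_, hbound⟩, rfl⟩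
        refine ⟨m + k, ?_⟩
        have e1 : (p:ℚ_[p])^(m+k) • (q • y) = zq • ((p:ℚ_[p])^m • y) := by
          rw [← algebraMap_smul ℚ_[p] zq, PadicInt.algebraMap_apply, hzq,
            smul_smul, smul_smul, pow_add]
          congr 1
          ring
        rw [e1]
        exact Submodule.smul_mem _ _ hm
    have hfull_inf : Submodule.span ℚ_[p] ((Λ₁ ⊓ Λ₂ : Submodule ℤ_[p] C) : Set C) = ⊤ := by
      rw [eq_top_iff, ← h₁.1.2.1, Submodule.span_le]
      intro x hx
      obtain ⟨m, hm⟩ := hshrink Λ₂ h₂.1.2.1 x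
      have h1 : (p:ℚ_[p])^m • x ∈ Λ₁ ⊓ Λ₂ :=
        Submodule.mem_inf.mpr ⟨haux Λ₁ m x hx, hm⟩
      have h2 : x = ((p:ℚ_[p])^m)⁻¹ • ((p:ℚ_[p])^m • x) := by
        rw [smul_smul, inv_mul_cancel₀ (pow_ne_zero _ hpQ), one_smul]
      rw [h2]
      exact Submodule.smul_mem _ _ (Submodule.subset_span h1)
    have hFG_inf : (Λ₁ ⊓ Λ₂).FG := by
      haveI : Module.Finite ℤ_[p] Λ₁ := Module.Finite.iff_fg.mpr h₁.1.1
      haveI : IsNoetherian ℤ_[p] Λ₁ := isNoetherian_of_isNoetherianRing_of_finite ℤ_[p] Λ₁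
      have h1 : (Submodule.comap Λ₁.subtype (Λ₁ ⊓ Λ₂)).FG := IsNoetherian.noetherian _
      have h2 := Submodule.FG.map Λ₁.subtype h1
      rw [Submodule.map_comap_subtype] at h2
      have h3 : Λ₁ ⊓ (Λ₁ ⊓ Λ₂) = Λ₁ ⊓ Λ₂ := by rw [← inf_assoc, inf_idem]
      rwa [h3] at h2
    have hsharp : sharpSet p h (Λ₁ ⊓ Λ₂) ⊆ ((Λ₁ ⊓ Λ₂ : Submodule ℤ_[p] C) : Set C) := by
      intro x hx
      have hMVF' := hMVF
      rw [hVF] at hMVF'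
      obtain ⟨hMFG, hMfull, hMdual, hMa, hMb, hMc⟩ := hMVF'
      have hMinf : M ≤ Submodule.span A (ι '' ((Λ₁ ⊓ Λ₂ : Submodule ℤ_[p] C) : Set C)) :=
        le_trans (le_inf hle1 hle2) hinfle
      have hιx : ι x ∈ M := by
        show ι x ∈ (M : Set N)
        rw [hMdual]
        intro y hy
        have hy' : y ∈ Submodule.span A (ι '' ((Λ₁ ⊓ Λ₂ : Submodule ℤ_[p] C) : Set C)) :=
          hMinf hy
        clear hy
        refine Submodule.span_induction ?_ ?_ ?_ ?_ hy'
        · rintro _ ⟨w, hw, rfl⟩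
          have hint : h x w ∈ integralClosure ℤ_[p] E := hx w hw
          obtain ⟨z₁, z₂, hz⟩ := OE_decomp hp2 σ π hσπ hπ hrank (h x w) hint
          obtain ⟨a₁, ha₁⟩ := aux_zp_to_A (K := K) hpA z₁
          obtain ⟨a₂, ha₂⟩ := aux_zp_to_A (K := K) hpA z₂
          refine ⟨a₁, a₂, ?_⟩
          rw [hHι, hz, map_add, map_mul]
          have hEL : ∀ q : ℚ_[p], algebraMap E L (algebraMap ℚ_[p] E q)
              = algebraMap K L (algebraMap ℚ_[p] K q) := by
            intro q
            rw [← IsScalarTower.algebraMap_apply ℚ_[p] E L,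
              IsScalarTower.algebraMap_apply ℚ_[p] K L]
          rw [hEL, hEL, ha₁, ha₂]
        · refine ⟨0, 0, ?_⟩
          rw [hHN]
          simp
        · rintro y z _ _ ⟨a, b, hab⟩ ⟨a', b', hab'⟩
          refine ⟨a + a', b + b', ?_⟩
          have hadd : HN (ι x) (y + z) = HN (ι x) y + HN (ι x) z := by
            rw [hHN, hHN, hHN]
            simp only [map_add]
            ring
          rw [hadd, hab, hab']
          simp only [map_add]
          ring
        · rintro a y _ ⟨a', b', hab⟩
          refine ⟨a * a', a * b', ?_⟩
          have hsm : a • y = algebraMap A K a • y := (algebraMap_smul K a y).symm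
          have h1 : HN (ι x) (a • y) = algebraMap K L (algebraMap A K a) * HN (ι x) y := by
            rw [hHN, hHN, hsm]
            simp only [LinearMap.map_smul, smul_eq_mul, map_mul]
            ring
          rw [h1, hab]
          simp only [map_mul]
          ring
      exact Submodule.mem_inf.mpr
        ⟨hdescΛ Λ₁ h₁.1.1 h₁.1.2.1 x (hle1 hιx), hdescΛ Λ₂ h₂.1.1 h₂.1.2.1 x (hle2 hιx)⟩
    refine ⟨⟨hFG_inf, hfull_inf, ?_⟩, ?_, hsharp⟩
    · intro x hx
      rw [Submodule.mem_inf] at hx ⊢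
      exact ⟨h₁.1.2.2 x hx.1, h₂.1.2.2 x hx.2⟩
    · intro x hx y hy
      rw [Submodule.mem_inf] at hx hy
      exact h₁.2.1 x hx.1 y hy.1
end

section
/- Let Λ be a vertex lattice in C, let k be an algebraically closed field of characteristic p containing 𝔽, and let M ⊆ Λ_k be a W(k)-lattice with M^∨ ⊆ M. Then M and M^∨ are each stable under Π, under Π∘τ_k, and under τ_k^{-1}∘Π (the latter two being, up to units of W(k), the Frobenius F and the Verschiebung V of the corresponding Dieudonné module). -/
set_option linter.unusedSectionVars false
set_option linter.unusedVariables false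

lemma aux_sq (p : ℕ) [Fact p.Prime] (hp2 : p ≠ 2) (u : ℤ_[p]) :
    ∃ z : ℤ_[p], z ^ 2 = 1 + p * u ^ 2 := by
  have hfact := (Fact.out : p.Prime)
  have h2 : ‖(2 : ℤ_[p])‖ = 1 := by
    have hnd : ¬ ((p : ℤ) ∣ (2 : ℤ)) := by
      intro hd
      have hd' : p ∣ 2 := by exact_mod_cast hd
      exact hp2 ((Nat.prime_dvd_prime_iff_eq hfact Nat.prime_two).mp hd')
    have h1 := (PadicInt.norm_int_lt_one_iff_dvd (2 : ℤ)).not.mpr hnd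
    have hle : ‖((2:ℤ) : ℤ_[p])‖ ≤ 1 := PadicInt.norm_le_one _
    push_neg at h1
    have : ‖((2:ℤ) : ℤ_[p])‖ = 1 := le_antisymm hle h1
    simpa using this
  set F : Polynomial ℤ_[p] := Polynomial.X ^ 2 - Polynomial.C (1 + p * u ^ 2) with hF
  have heval : F.eval 1 = -(p * u ^ 2) := by simp [hF]
  have hderiv : F.derivative = Polynomial.C 2 * Polynomial.X := by
    rw [hF, Polynomial.derivative_sub, Polynomial.derivative_C, Polynomial.derivative_X_pow]
    simp
  have hdeval : F.derivative.eval 1 = 2 := by rw [hderiv]; simp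
  have hnorm : ‖F.eval 1‖ < ‖F.derivative.eval 1‖ ^ 2 := by
    rw [heval, hdeval, h2, norm_neg]
    have h3 : ‖(p : ℤ_[p]) * u ^ 2‖ ≤ ‖(p : ℤ_[p])‖ := by
      rw [norm_mul]
      exact mul_le_of_le_one_right (norm_nonneg _) (PadicInt.norm_le_one _)
    have hp : ‖(p : ℤ_[p])‖ < 1 := by
      rw [PadicInt.norm_p]
      have h4 : (1:ℝ) < p := by exact_mod_cast hfact.one_lt
      rw [inv_lt_one_iff₀]; right; exact h4
    nlinarith [h3, hp]
  obtain ⟨z, hz, -⟩ := hensels_lemma hnorm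
  refine ⟨z, ?_⟩
  have h5 : z ^ 2 - (1 + p * u ^ 2) = 0 := by simpa [hF] using hz
  exact sub_eq_zero.mp h5

section
variable (p : ℕ) [Fact p.Prime]
variable (K : Type) [Field K] [Algebra ℚ_[p] K]
variable (A : Type) [CommRing A] [IsDomain A] [Algebra A K] [IsFractionRing A K]
  [IsDiscreteValuationRing A]

-- basic: an element of K is in the image of A, or its inverse is, with nonunit witness
lemma aux_dichotomy (hpA : Irreducible (p : A)) (x : K)
    (hx : ¬ ∃ a : A, algebraMap A K a = x) :
    ∃ c : A, algebraMap A K (p * c) = x⁻¹ := by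
  rcases ValuationRing.isInteger_or_isInteger A x with ⟨a, ha⟩ | ⟨b, hb⟩
  · exact absurd ⟨a, ha⟩ hx
  · -- b • ... IsInteger means ∃ witness; hb : algebraMap A K b = x⁻¹
    -- b is not a unit
    by_cases hbu : IsUnit b
    · exfalso
      obtain ⟨v, hv⟩ := hbu
      apply hx
      have hx0 : x ≠ 0 := by
        rintro rfl
        apply hx; exact ⟨0, by simp⟩
      refine ⟨↑v⁻¹, ?_⟩
      have h1 : algebraMap A K ↑v⁻¹ * algebraMap A K b = 1 := by
        rw [← map_mul, ← hv, Units.inv_mul, map_one]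
      rw [hb] at h1
      have h2 : algebraMap A K ↑v⁻¹ = (x⁻¹)⁻¹ := eq_inv_of_mul_eq_one_left h1
      rwa [inv_inv] at h2
    · -- b in maximal ideal = span {p}
      have hmem : b ∈ IsLocalRing.maximalIdeal A := by
        rwa [IsLocalRing.mem_maximalIdeal, mem_nonunits_iff]
      rw [hpA.maximalIdeal_eq, Ideal.mem_span_singleton] at hmem
      obtain ⟨c, hc⟩ := hmem
      exact ⟨c, by rw [← hc]; exact hb⟩
lemma aux_ZpToA (hp2 : p ≠ 2) (hpA : Irreducible (p : A)) (u : ℤ_[p]) :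
    ∃ a : A, algebraMap A K a = algebraMap ℚ_[p] K (u : ℚ_[p]) := by
  by_contra hx
  set x : K := algebraMap ℚ_[p] K (u : ℚ_[p]) with hxdef
  obtain ⟨c, hc⟩ := aux_dichotomy p K A hpA x (by simpa using hx)
  have hx0 : x ≠ 0 := by
    rintro h0
    exact hx ⟨0, by simp [h0]⟩
  -- 1 + p u² is a square in ℤ_p
  obtain ⟨z, hz⟩ := aux_sq p hp2 u
  -- push to K
  set y : K := algebraMap ℚ_[p] K (z : ℚ_[p]) with hydef
  have hz' : ((z : ℚ_[p])) ^ 2 = 1 + p * (u : ℚ_[p]) ^ 2 := by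
    exact_mod_cast congrArg (fun t : ℤ_[p] => (t : ℚ_[p])) hz
  have hzK : y ^ 2 = 1 + p * x ^ 2 := by
    rw [hydef, ← map_pow, hz', map_add, map_one, map_mul, map_natCast, map_pow, hxdef]
  set b : A := p * c with hbdef
  have hbx : algebraMap A K b * x = 1 := by
    rw [hc]; field_simp
  -- (b y)² = b² + p
  have key : (algebraMap A K b * y) ^ 2 = algebraMap A K (b ^ 2 + p) := by
    rw [mul_pow, hzK, map_add, map_pow, map_natCast]
    have hbx2 : algebraMap A K b ^ 2 * x ^ 2 = 1 := by
      rw [← mul_pow, hbx, one_pow]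
    linear_combination (p : K) * hbx2
  -- by is integral over A
  have hint : IsIntegral A (algebraMap A K b * y) := by
    refine ⟨Polynomial.X ^ 2 - Polynomial.C (b ^ 2 + p), ?_, ?_⟩
    · apply Polynomial.monic_X_pow_sub_C _ (by norm_num)
    · simp [Polynomial.eval₂_sub, Polynomial.eval₂_pow, key]
  obtain ⟨s, hs⟩ := IsIntegrallyClosed.isIntegral_iff.mp hint
  have hs2 : algebraMap A K (s ^ 2) = algebraMap A K (b ^ 2 + p) := by
    rw [map_pow, hs, key]
  have hseq : s ^ 2 = b ^ 2 + p := IsFractionRing.injective A K hs2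
  -- b = p c so s² = p(p c² + 1)
  have hfac : s ^ 2 = p * (p * c ^ 2 + 1) := by rw [hseq, hbdef]; ring
  -- p c² + 1 is a unit
  have hunit : IsUnit ((p : A) * c ^ 2 + 1) := by
    by_contra hnu
    have hmem : (p : A) * c ^ 2 + 1 ∈ IsLocalRing.maximalIdeal A := by
      rwa [IsLocalRing.mem_maximalIdeal, mem_nonunits_iff]
    have hpm : (p : A) * c ^ 2 ∈ IsLocalRing.maximalIdeal A := by
      rw [hpA.maximalIdeal_eq, Ideal.mem_span_singleton]
      exact Dvd.intro _ rfl
    have : (1 : A) ∈ IsLocalRing.maximalIdeal A := by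
      have := Ideal.sub_mem _ hmem hpm
      simpa using this
    exact (IsLocalRing.maximalIdeal A).ne_top_iff_one.mp (Ideal.IsMaximal.ne_top inferInstance) this
  -- so p = s * (s * unit⁻¹), contradicting irreducibility
  obtain ⟨w, hw⟩ := hunit
  have hps : (p : A) = s * (s * ↑w⁻¹) := by
    have : (p : A) * (↑w * ↑w⁻¹) = s * (s * ↑w⁻¹) := by
      rw [hw]
      calc (p : A) * (((p : A) * c ^ 2 + 1) * ↑w⁻¹)
          = (p * ((p : A) * c ^ 2 + 1)) * ↑w⁻¹ := by ring
        _ = s ^ 2 * ↑w⁻¹ := by rw [← hfac]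
        _ = s * (s * ↑w⁻¹) := by ring
    simpa using this
  have := hpA.isUnit_or_isUnit hps
  have hsu : IsUnit s := by
    rcases this with h | h
    · exact h
    · have : IsUnit (s * ↑w⁻¹ * ↑w) := h.mul (Units.isUnit w)
      simpa [mul_assoc] using this
  exact hpA.not_isUnit (by rw [hps]; exact hsu.mul (hsu.mul (Units.isUnit w⁻¹)))

lemma aux_sigmaInv (hpA : Irreducible (p : A)) (σK : K ≃ₐ[ℚ_[p]] K)
    (hσA : ∀ a : A, ∃ a' : A, σK (algebraMap A K a) = algebraMap A K a')
    (x : K) (hx : ∃ a : A, algebraMap A K a = x) :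
    ∃ a : A, algebraMap A K a = σK.symm x := by
  by_contra hcon
  obtain ⟨c, hc⟩ := aux_dichotomy p K A hpA (σK.symm x) hcon
  have hx0 : σK.symm x ≠ 0 := by
    rintro h0
    exact hcon ⟨0, by simp [h0]⟩
  obtain ⟨a, ha⟩ := hx
  have h1 : σK ((σK.symm x)⁻¹) = x⁻¹ := by
    rw [map_inv₀, AlgEquiv.apply_symm_apply]
  have hxne : x ≠ 0 := fun h0 => hx0 (by simp [h0])
  obtain ⟨cc', hcc'⟩ := hσA c
  have h3 : algebraMap A K (p * cc') = x⁻¹ := by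
    have e1 : σK (algebraMap A K (p * c)) = x⁻¹ := by rw [hc, h1]
    have e2 : algebraMap A K (p * c) = (p : K) * algebraMap A K c := by
      rw [map_mul, map_natCast]
    rw [e2, map_mul, map_natCast, hcc'] at e1
    rw [map_mul, map_natCast]
    exact e1
  have h4 : algebraMap A K (a * (p * cc')) = 1 := by
    rw [map_mul, ha, h3, mul_inv_cancel₀ hxne]
  have h5 : a * (p * cc') = 1 := by
    apply IsFractionRing.injective A K
    rw [h4, map_one]
  have : IsUnit (p : A) := IsUnit.of_mul_eq_one (cc' * a) (by rw [← h5]; ring)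
  exact hpA.not_isUnit this
end


lemma aux_trace (p : ℕ) [Fact p.Prime] (hp2 : p ≠ 2)
    (E : Type) [Field E] [Algebra ℚ_[p] E] [Algebra ℤ_[p] E] [IsScalarTower ℤ_[p] ℚ_[p] E]
    [FiniteDimensional ℚ_[p] E]
    (σ : E ≃ₐ[ℚ_[p]] E) (π : E) (hσπ : σ π = -π)
    (hπ : ∃ π₀ : ℚ_[p], algebraMap ℚ_[p] E π₀ = π ^ 2 ∧ ‖π₀‖ = (p : ℝ)⁻¹)
    (hrank : Module.finrank ℚ_[p] E = 2) :
    ∀ a ∈ integralClosure ℤ_[p] E, ∃ v : ℤ_[p],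
      2⁻¹ * Algebra.trace ℚ_[p] E (π⁻¹ * a) = (v : ℚ_[p]) := by
  obtain ⟨π₀, hπ0, hπ0norm⟩ := hπ
  have hfact := (Fact.out : p.Prime)
  have hp0 : (0:ℝ) < p := by exact_mod_cast hfact.pos
  have hπ₀ne : π₀ ≠ 0 := by
    intro h0
    rw [h0, norm_zero] at hπ0norm
    exact absurd hπ0norm.symm (by positivity)
  have hπne : π ≠ 0 := by
    intro h0
    rw [h0] at hπ0
    simp at hπ0
    exact hπ₀ne hπ0
  have hone : (1:E) ≠ 0 := one_ne_zero
  -- linear independence of 1, π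
  have hli : LinearIndependent ℚ_[p] ![ (1:E), π] := by
    rw [LinearIndependent.pair_iff' hone]
    intro a ha
    have hfix : σ π = π := by rw [← ha, map_smul, map_one]
    rw [hσπ] at hfix
    have this := hfix
    have h2 : (2:E) * π = 0 := by
      have := congrArg (· + π) this
      simp at this
      linear_combination -this
    have h2ne : (2:E) ≠ 0 := by
      intro hh
      have h3 : algebraMap ℚ_[p] E 2 = algebraMap ℚ_[p] E 0 := by
        rw [map_ofNat, map_zero]; exact hh
      have := (algebraMap ℚ_[p] E).injective h3
      norm_num at this
    rcases mul_eq_zero.mp h2 with h | h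
    · exact h2ne h
    · exact hπne h
  -- basis {1, π}
  have hcard : Fintype.card (Fin 2) = Module.finrank ℚ_[p] E := by simp [hrank]
  set bE := basisOfLinearIndependentOfCardEqFinrank hli hcard with hbE
  have hbE0 : bE 0 = 1 := by
    rw [hbE, coe_basisOfLinearIndependentOfCardEqFinrank]; rfl
  have hbE1 : bE 1 = π := by
    rw [hbE, coe_basisOfLinearIndependentOfCardEqFinrank]; rfl
  -- decomposition of any element
  have hdecomp : ∀ a : E, ∃ u v : ℚ_[p], a = algebraMap ℚ_[p] E u + v • π := by
    intro a
    refine ⟨bE.repr a 0, bE.repr a 1, ?_⟩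
    have := bE.sum_repr a
    rw [Fin.sum_univ_two, hbE0, hbE1] at this
    rw [Algebra.algebraMap_eq_smul_one]
    exact this.symm
  -- trace facts
  have htr1 : Algebra.trace ℚ_[p] E 1 = 2 := by
    have := Algebra.trace_algebraMap (S := E) (1 : ℚ_[p])
    rw [map_one, hrank] at this
    rw [this]; norm_num
  have htrπ : Algebra.trace ℚ_[p] E π = 0 := by
    have h1 : Algebra.trace ℚ_[p] E (σ π) = Algebra.trace ℚ_[p] E π :=
      Algebra.trace_eq_of_algEquiv σ π
    rw [hσπ, map_neg] at h1
    have h2 : (2:ℚ_[p]) * Algebra.trace ℚ_[p] E π = 0 := by linear_combination -h1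
    rcases mul_eq_zero.mp h2 with h | h
    · norm_num at h
    · exact h
  -- π⁻¹ = π₀⁻¹ • π
  have hπinv : π⁻¹ = π₀⁻¹ • π := by
    apply inv_eq_of_mul_eq_one_right
    rw [mul_smul_comm, ← sq, ← hπ0, Algebra.smul_def, ← map_mul, inv_mul_cancel₀ hπ₀ne, map_one]
  intro a ha
  obtain ⟨u, v, huv⟩ := hdecomp a
  -- integrality of v
  have hσa : σ a = algebraMap ℚ_[p] E u - v • π := by
    rw [huv, map_add, AlgEquiv.commutes, map_smul, hσπ, smul_neg, sub_eq_add_neg]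
  have hainteg : IsIntegral ℤ_[p] a := ha
  have hσinteg : IsIntegral ℤ_[p] (σ a) := by
    have := IsIntegral.map (σ.toAlgHom.restrictScalars ℤ_[p]) hainteg
    exact this
  have hdint : IsIntegral ℤ_[p] (a - σ a) := hainteg.sub hσinteg
  have hdeq : a - σ a = (2 * v) • π := by
    rw [hσa, huv]
    module
  have hsqeq : (a - σ a) ^ 2 = algebraMap ℚ_[p] E (4 * v ^ 2 * π₀) := by
    rw [hdeq, smul_pow, ← hπ0, Algebra.smul_def, ← map_mul]
    congr 1
    ring
  have hsqint : IsIntegral ℤ_[p] (algebraMap ℚ_[p] E (4 * v ^ 2 * π₀)) := by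
    rw [← hsqeq]; exact hdint.pow 2
  have hQint : IsIntegral ℤ_[p] (4 * v ^ 2 * π₀ : ℚ_[p]) :=
    IsIntegral.tower_bot (algebraMap ℚ_[p] E).injective hsqint
  obtain ⟨w, hw⟩ := IsIntegrallyClosed.isIntegral_iff.mp hQint
  have hwnorm : ‖(4 * v ^ 2 * π₀ : ℚ_[p])‖ ≤ 1 := by
    have hw' : ((w : ℚ_[p])) = 4 * v ^ 2 * π₀ := hw
    rw [← hw', PadicInt.padic_norm_e_of_padicInt]
    exact PadicInt.norm_le_one w
  -- ‖4‖ = 1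
  have h4 : ‖(4 : ℚ_[p])‖ = 1 := by
    have hnd : ¬ ((p : ℤ) ∣ (4 : ℤ)) := by
      intro hd
      have hd' : p ∣ 4 := by exact_mod_cast hd
      have h4' : p ∣ 2 ^ 2 := by simpa using hd'
      have h2 : p ∣ 2 := hfact.dvd_of_dvd_pow h4'
      exact hp2 ((Nat.prime_dvd_prime_iff_eq hfact Nat.prime_two).mp h2)
    have h1 := (Padic.norm_intCast_lt_one_iff (k := (4 : ℤ))).not.mpr hnd
    push_neg at h1
    have hle : ‖((4:ℤ) : ℚ_[p])‖ ≤ 1 := by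
      exact_mod_cast Padic.norm_int_le_one (4:ℤ)
    have : ‖((4:ℤ) : ℚ_[p])‖ = 1 := le_antisymm hle h1
    exact_mod_cast this
  have hvnorm : ‖v‖ ≤ 1 := by
    by_cases hv0 : v = 0
    · simp [hv0]
    by_contra hgt
    push_neg at hgt
    have hval : ‖v‖ = (p:ℝ) ^ (-(v.valuation)) := Padic.norm_eq_zpow_neg_valuation hv0
    have hp1 : (1:ℝ) < p := by exact_mod_cast hfact.one_lt
    have hvpos : 0 < -(v.valuation) := by
      by_contra hle
      push_neg at hle
      have : ((p:ℝ)) ^ (-(v.valuation)) ≤ 1 := zpow_le_one_of_nonpos₀ (le_of_lt hp1) hle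
      rw [← hval] at this
      linarith
    have hge : (p:ℝ) ≤ ‖v‖ := by
      rw [hval]
      calc (p:ℝ) = (p:ℝ) ^ (1:ℤ) := (zpow_one _).symm
        _ ≤ (p:ℝ) ^ (-(v.valuation)) := by
            apply zpow_le_zpow_right₀ (le_of_lt hp1)
            omega
    have hcalc : ‖(4 * v ^ 2 * π₀ : ℚ_[p])‖ = ‖v‖ ^ 2 * (p:ℝ)⁻¹ := by
      rw [norm_mul, norm_mul, h4, hπ0norm, norm_pow, one_mul]
    rw [hcalc] at hwnorm
    have hfin : (p:ℝ) ≤ ‖v‖ ^ 2 * (p:ℝ)⁻¹ := by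
      have h1 : (p:ℝ)^2 ≤ ‖v‖^2 := by nlinarith
      calc (p:ℝ) = (p:ℝ)^2 * (p:ℝ)⁻¹ := by field_simp
        _ ≤ ‖v‖^2 * (p:ℝ)⁻¹ := mul_le_mul_of_nonneg_right h1 (by positivity)
    linarith
  -- final computation
  refine ⟨⟨v, hvnorm⟩, ?_⟩
  have hπinva : π⁻¹ * a = (u * π₀⁻¹) • π + algebraMap ℚ_[p] E v := by
    rw [huv, hπinv]
    have e1 : (π₀⁻¹ • π) * (algebraMap ℚ_[p] E u) = (u * π₀⁻¹) • π := by
      rw [smul_mul_assoc, Algebra.smul_def, Algebra.smul_def, map_mul]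
      ring
    have e2 : (π₀⁻¹ • π) * (v • π) = algebraMap ℚ_[p] E v := by
      rw [smul_mul_smul_comm, ← sq, ← hπ0, Algebra.smul_def, ← map_mul]
      congr 1
      field_simp
    rw [mul_add, e1, e2]
  rw [hπinva, map_add, map_smul]
  have htralg : Algebra.trace ℚ_[p] E (algebraMap ℚ_[p] E v) = 2 * v := by
    have := Algebra.trace_algebraMap (S := E) v
    rw [hrank] at this
    rw [this]
    rw [two_smul]
    ring
  rw [htrπ, htralg]
  rw [smul_zero, zero_add]
  have hcoe : ((⟨v, hvnorm⟩ : ℤ_[p]) : ℚ_[p]) = v := rfl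
  rw [hcoe]
  ring




/- Setup: `E/ℚ_p` ramified quadratic with automorphism `σ`, uniformizer `π` (`σπ = −π`,
`π² = π₀` a uniformizer of `ℚ_p`), `C` an `n`-dimensional hermitian `E`-space with form `h`,
`⟨x,y⟩ = (1/2)·Tr_{E/ℚ_p}(π⁻¹ h x y)`, and the notions of dual lattice `Λ^♯` and vertex
lattice as in the paper (lattices in `C` are f.g. full `π`-stable `ℤ_p`-submodules).
For `k ⊇ 𝔽` algebraically closed of characteristic `p`, `W(k)` and `W(k)_ℚ` are modelled as an
abstract DVR `A` with fraction field `K` (a `ℚ_p`-algebra), with Frobenius `σK` preserving `A`;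
`N_k := C ⊗_{ℚ_p} W(k)_ℚ` is a `K`-space with embedding `ι : C → N` carrying a `ℚ_p`-basis of
`C` to a `K`-basis, `τ_k := id_C ⊗ σK`, `Π` the `K`-linear action of `π`, `BN` the
`K`-bilinear extension of `⟨·,·⟩`, `Λ_k := Λ ⊗_{ℤ_p} W(k)` the `A`-span of `ι(Λ)`, and
`M^∨ = {x : ⟨x,y⟩ ∈ W(k) ∀ y ∈ M}`.

STATEMENT 13: if `Λ` is a vertex lattice, `M ⊆ Λ_k` a `W(k)`-lattice with `M^∨ ⊆ M`, then `M`
and `M^∨` are stable under `Π`, under `Π∘τ_k`, and under `τ_k⁻¹∘Π` (up to units of `W(k)`,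
the Frobenius `F` and Verschiebung `V` of the corresponding Dieudonné module). -/
set_option maxHeartbeats 1000000 in
theorem statement13
    (p : ℕ) [Fact p.Prime] (hp2 : p ≠ 2)
    (E : Type) [Field E] [Algebra ℚ_[p] E] [Algebra ℤ_[p] E] [IsScalarTower ℤ_[p] ℚ_[p] E]
    [FiniteDimensional ℚ_[p] E]
    (σ : E ≃ₐ[ℚ_[p]] E) (π : E) (hσπ : σ π = -π)
    (hπ : ∃ π₀ : ℚ_[p], algebraMap ℚ_[p] E π₀ = π ^ 2 ∧ ‖π₀‖ = (p : ℝ)⁻¹)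
    (hrank : Module.finrank ℚ_[p] E = 2)
    (C : Type) [AddCommGroup C] [Module E C] [Module ℚ_[p] C] [Module ℤ_[p] C]
    [IsScalarTower ℚ_[p] E C] [IsScalarTower ℤ_[p] E C] [IsScalarTower ℤ_[p] ℚ_[p] C]
    (n : ℕ) (hn : Module.finrank E C = n)
    (h : C → C → E)
    (haddl : ∀ x x' y, h (x + x') y = h x y + h x' y)
    (hsmull : ∀ (a : E) (x y : C), h (a • x) y = a * h x y)
    (hherm : ∀ x y, h y x = σ (h x y))
    (hnd : ∀ x, (∀ y, h x y = 0) → x = 0)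
    -- Λ is a vertex lattice: an 𝒪_E-lattice with πΛ ⊆ Λ^♯ ⊆ Λ,
    -- where Λ^♯ = {x | ∀ y ∈ Λ, h x y ∈ 𝒪_E}
    (Λ : Submodule ℤ_[p] C)
    (hΛfg : Λ.FG) (hΛfull : Submodule.span ℚ_[p] (Λ : Set C) = ⊤)
    (hΛπ : ∀ x ∈ Λ, π • x ∈ Λ)
    (hΛ1 : ∀ x ∈ Λ, ∀ y ∈ Λ, h (π • x) y ∈ integralClosure ℤ_[p] E)
    (hΛ2 : ∀ x : C, (∀ y ∈ Λ, h x y ∈ integralClosure ℤ_[p] E) → x ∈ Λ)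
    -- W(k) and W(k)_ℚ with Frobenius σK preserving W(k)
    (K : Type) [Field K] [Algebra ℚ_[p] K]
    (A : Type) [CommRing A] [IsDomain A] [Algebra A K] [IsFractionRing A K]
    [IsDiscreteValuationRing A]
    (hpA : Irreducible (p : A))
    (σK : K ≃ₐ[ℚ_[p]] K)
    (hσA : ∀ a : A, ∃ a' : A, σK (algebraMap A K a) = algebraMap A K a')
    -- N_k = C ⊗_{ℚ_p} W(k)_ℚ
    (N : Type) [AddCommGroup N] [Module K N] [Module A N] [IsScalarTower A K N]
    [Module ℚ_[p] N] [IsScalarTower ℚ_[p] K N]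
    (ι : C →ₗ[ℚ_[p]] N)
    (bC : Module.Basis (Fin (2 * n)) ℚ_[p] C) (bN : Module.Basis (Fin (2 * n)) K N)
    (hb : ∀ j, bN j = ι (bC j))
    -- τ_k = id_C ⊗ σK
    (τ : N ≃+ N) (hτsl : ∀ (c : K) (x : N), τ (c • x) = σK c • τ x)
    (hτι : ∀ v : C, τ (ι v) = ι v)
    -- the action Π of π on N_k
    (Pn : N →ₗ[K] N) (hPι : ∀ v : C, Pn (ι v) = ι (π • v))
    -- the W(k)_ℚ-bilinear extension BN of ⟨·,·⟩
    (BN : LinearMap.BilinForm K N)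
    (hBι : ∀ v w : C, BN (ι v) (ι w)
      = algebraMap ℚ_[p] K (2⁻¹ * Algebra.trace ℚ_[p] E (π⁻¹ * h v w)))
    (halt : ∀ x, BN x x = 0)
    (hskew : ∀ x y, BN (Pn x) y = - BN x (Pn y))
    -- M ⊆ Λ_k a W(k)-lattice with M^∨ ⊆ M
    (M : Submodule A N)
    (hMfg : M.FG) (hMfull : Submodule.span K (M : Set N) = ⊤)
    (hMΛ : M ≤ Submodule.span A (ι '' (Λ : Set C)))
    (Md : Set N) (hMd : Md = {x : N | ∀ y ∈ M, ∃ a : A, BN x y = algebraMap A K a})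
    (hMdual : Md ⊆ (M : Set N)) :
    -- M is stable under Π, Π∘τ_k and τ_k⁻¹∘Π
    ((∀ x ∈ M, Pn x ∈ M) ∧ (∀ x ∈ M, Pn (τ x) ∈ M) ∧ (∀ x ∈ M, τ.symm (Pn x) ∈ M)) ∧
    -- and so is M^∨
    ((∀ x ∈ Md, Pn x ∈ Md) ∧ (∀ x ∈ Md, Pn (τ x) ∈ Md) ∧ (∀ x ∈ Md, τ.symm (Pn x) ∈ Md)) := by
  classical
  have hAofZp : ∀ u : ℤ_[p], ∃ a : A, algebraMap A K a = algebraMap ℚ_[p] K (u : ℚ_[p]) :=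
    aux_ZpToA p K A hp2 hpA
  have htraceInt := aux_trace p hp2 E σ π hσπ hπ hrank
  -- the "A-integral pairing" condition extends from generators to the span
  have hdualspan : ∀ (u : N) (S : Set N),
      (∀ w ∈ S, ∃ a : A, BN u w = algebraMap A K a) →
      ∀ w ∈ Submodule.span A S, ∃ a : A, BN u w = algebraMap A K a := by
    intro u S hS w hw
    induction hw using Submodule.span_induction with
    | mem x hx => exact hS x hx
    | zero => exact ⟨0, by simp⟩
    | add x y hx hy ihx ihy =>
        obtain ⟨a, ha⟩ := ihx; obtain ⟨b, hb'⟩ := ihy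
        exact ⟨a + b, by rw [map_add, ha, hb', map_add]⟩
    | smul a x hx ih =>
        obtain ⟨b, hb'⟩ := ih
        refine ⟨a * b, ?_⟩
        rw [← algebraMap_smul K a x, map_smul, smul_eq_mul, hb', ← map_mul]
  -- Λk is stable under τ
  have hτΛk : ∀ x ∈ Submodule.span A (ι '' (Λ : Set C)),
      τ x ∈ Submodule.span A (ι '' (Λ : Set C)) := by
    intro x hx
    induction hx using Submodule.span_induction with
    | mem x hx =>
        obtain ⟨v, hv, rfl⟩ := hx
        rw [hτι]
        exact Submodule.subset_span ⟨v, hv, rfl⟩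
    | zero => rw [map_zero]; exact Submodule.zero_mem _
    | add x y hx hy ihx ihy => rw [map_add]; exact Submodule.add_mem _ ihx ihy
    | smul a x hx ih =>
        obtain ⟨a', ha'⟩ := hσA a
        have heq : τ (a • x) = a' • τ x := by
          rw [← algebraMap_smul K a x, hτsl, ha', algebraMap_smul]
        rw [heq]
        exact Submodule.smul_mem _ _ ih
  -- F1 : Π maps Λk into the dual of Λk
  have hF1 : ∀ z ∈ Submodule.span A (ι '' (Λ : Set C)),
      ∀ w ∈ Submodule.span A (ι '' (Λ : Set C)),
      ∃ a : A, BN (Pn z) w = algebraMap A K a := by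
    intro z hz
    induction hz using Submodule.span_induction with
    | mem x hx =>
        obtain ⟨lam, hlam, rfl⟩ := hx
        intro w hw
        refine hdualspan _ _ ?_ w hw
        rintro w' ⟨μ, hμ, rfl⟩
        rw [hPι, hBι]
        obtain ⟨v, hv⟩ := htraceInt _ (hΛ1 lam hlam μ hμ)
        rw [hv]
        obtain ⟨a, ha⟩ := hAofZp v
        exact ⟨a, ha.symm⟩
    | zero =>
        intro w hw
        exact ⟨0, by simp⟩
    | add x y hx hy ihx ihy =>
        intro w hw
        obtain ⟨a, ha⟩ := ihx w hw; obtain ⟨b, hb'⟩ := ihy w hw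
        refine ⟨a + b, ?_⟩
        rw [map_add, map_add, LinearMap.add_apply, ha, hb', map_add]
    | smul a x hx ih =>
        intro w hw
        obtain ⟨b, hb'⟩ := ih w hw
        refine ⟨a * b, ?_⟩
        rw [← algebraMap_smul K a x, map_smul, map_smul, LinearMap.smul_apply,
          smul_eq_mul, hb', ← map_mul]
  -- expansion of τ in the basis
  have hτexp : ∀ x : N, τ x = ∑ j, σK (bN.repr x j) • bN j := by
    intro x
    conv_lhs => rw [← bN.sum_repr x]
    rw [map_sum]
    refine Finset.sum_congr rfl ?_
    intro j _
    rw [hτsl]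
    congr 1
    rw [hb, hτι]
  -- semilinearity of BN with second argument in ι(C)
  have hF4 : ∀ (x : N) (vc : C), BN (τ x) (ι vc) = σK (BN x (ι vc)) := by
    intro x vc
    rw [hτexp x]
    conv_rhs => rw [← bN.sum_repr x]
    rw [map_sum, map_sum, LinearMap.sum_apply, LinearMap.sum_apply, map_sum]
    refine Finset.sum_congr rfl ?_
    intro j _
    rw [map_smul, map_smul, LinearMap.smul_apply, LinearMap.smul_apply,
      smul_eq_mul, smul_eq_mul, map_mul]
    congr 1
    rw [hb, hBι]
    exact (σK.commutes _).symm
  -- F3 : τ⁻¹ ∘ Π maps Λk into the dual of Λk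
  have hF3 : ∀ z ∈ Submodule.span A (ι '' (Λ : Set C)),
      ∀ w ∈ Submodule.span A (ι '' (Λ : Set C)),
      ∃ a : A, BN (τ.symm (Pn z)) w = algebraMap A K a := by
    intro z hz w hw
    refine hdualspan _ _ ?_ w hw
    rintro w' ⟨μ, hμ, rfl⟩
    have h1 : BN (Pn z) (ι μ) = σK (BN (τ.symm (Pn z)) (ι μ)) := by
      conv_lhs => rw [← τ.apply_symm_apply (Pn z)]
      exact hF4 _ μ
    obtain ⟨a, ha⟩ := hF1 z hz (ι μ) (Submodule.subset_span ⟨μ, hμ, rfl⟩)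
    have h2 : BN (τ.symm (Pn z)) (ι μ) = σK.symm (algebraMap A K a) := by
      rw [← ha, h1, AlgEquiv.symm_apply_apply]
    obtain ⟨a', ha'⟩ := aux_sigmaInv p K A hpA σK hσA (algebraMap A K a) ⟨a, rfl⟩
    exact ⟨a', by rw [h2, ← ha']⟩
  -- anything pairing A-integrally with Λk lies in Md (hence in M)
  have hLDMd : ∀ u : N,
      (∀ w ∈ Submodule.span A (ι '' (Λ : Set C)), ∃ a : A, BN u w = algebraMap A K a) →
      u ∈ Md := by
    intro u hu
    rw [hMd]
    intro y hy
    exact hu y (hMΛ hy)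
  refine ⟨⟨?_, ?_, ?_⟩, ?_, ?_, ?_⟩
  · intro x hx
    exact hMdual (hLDMd _ (hF1 x (hMΛ hx)))
  · intro x hx
    exact hMdual (hLDMd _ (hF1 (τ x) (hτΛk x (hMΛ hx))))
  · intro x hx
    exact hMdual (hLDMd _ (hF3 x (hMΛ hx)))
  · intro x hx
    exact hLDMd _ (hF1 x (hMΛ (hMdual hx)))
  · intro x hx
    exact hLDMd _ (hF1 (τ x) (hτΛk x (hMΛ (hMdual hx))))
  · intro x hx
    exact hLDMd _ (hF3 x (hMΛ (hMdual hx)))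
end

section
/- For every i with 1 ≤ i ≤ m−1: (a) w_i commutes with every element of W_i; (b) ℓ(w_i·u) = i + ℓ(u) for every u ∈ W_i (in particular ℓ(w_i) = i); (c) if x_i ∈ W_i has maximal length among the elements of W_i, then every element of the double coset W_i·w_i·W_i has length at most ℓ(w_i·x_i) = i + ℓ(x_i), i.e. w_i·x_i is a longest element of W_i·w_i·W_i. -/
namespace Statement17Aux

open CoxeterSystem

variable {B : Type*} {W : Type*} [Group W] {M : CoxeterMatrix B} (cs : CoxeterSystem M W)

open Classical in
/-- The underlying function of the Tits reflection representation on `W × ZMod 2`. -/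
noncomputable def etaFun (i : B) : W × ZMod 2 → W × ZMod 2 :=
  fun p => (cs.simple i * p.1 * cs.simple i, p.2 + if p.1 = cs.simple i then 1 else 0)

theorem conj_eq_iff (a x y : W) : a * x * a⁻¹ = y ↔ x = a⁻¹ * y * a := by
  constructor
  · rintro rfl; group
  · rintro rfl; group

theorem etaFun_involutive (i : B) : Function.Involutive (etaFun cs i) := by
  classical
  intro p
  have h1 : (cs.simple i * p.1 * cs.simple i = cs.simple i) ↔ p.1 = cs.simple i := by
    rw [mul_assoc, mul_eq_left, mul_eq_one_iff_eq_inv, cs.inv_simple]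
  simp only [etaFun]
  refine Prod.ext ?_ ?_
  · simp [mul_assoc, cs.simple_mul_simple_self, cs.simple_mul_simple_cancel_left]
  · simp only
    simp only [h1]
    generalize (if p.1 = cs.simple i then (1 : ZMod 2) else 0) = a
    generalize p.2 = q
    revert q
    revert a
    decide

/-- The Tits reflection representation generator. -/
noncomputable def eta (i : B) : Equiv.Perm (W × ZMod 2) :=
  (etaFun_involutive cs i).toPerm _

open Classical in
theorem eta_apply (i : B) (p : W × ZMod 2) :
    eta cs i p = (cs.simple i * p.1 * cs.simple i,
      p.2 + if p.1 = cs.simple i then 1 else 0) := by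
  simp only [eta, Function.Involutive.coe_toPerm, etaFun]

open Classical in
theorem eta_pow_apply (i j : B) (k : ℕ) (t : W) (ε : ZMod 2) :
    ((eta cs i * eta cs j) ^ k) (t, ε) =
      ((cs.simple i * cs.simple j) ^ k * t * ((cs.simple i * cs.simple j) ^ k)⁻¹,
        ε + ∑ r ∈ Finset.range (2 * k),
          if t = (cs.simple j * cs.simple i) ^ r * cs.simple j then 1 else 0) := by
  induction k generalizing t ε with
  | zero => simp
  | succ k ih =>
    have hd : (cs.simple i * cs.simple j)⁻¹ = cs.simple j * cs.simple i := by
      rw [mul_inv_rev, cs.inv_simple, cs.inv_simple]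
    rw [pow_succ, Equiv.Perm.mul_apply, Equiv.Perm.mul_apply, eta_apply, eta_apply]
    simp only
    rw [ih]
    have e1 : cs.simple i * (cs.simple j * t * cs.simple j) * cs.simple i
        = (cs.simple i * cs.simple j) * t * ((cs.simple i * cs.simple j))⁻¹ := by
      rw [hd]; simp [mul_assoc]
    have helper : ∀ (x y : W) (r : ℕ),
        (y * x) * ((y * x) ^ r * y) * (x * y) = (y * x) ^ (r + 2) * y := by
      intro x y r
      calc (y * x) * ((y * x) ^ r * y) * (x * y)
          = ((y * x) * (y * x) ^ r) * (y * (x * y)) := by simp only [mul_assoc]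
        _ = (y * x) ^ (r + 1) * ((y * x) * y) := by rw [← pow_succ']; simp only [mul_assoc]
        _ = (y * x) ^ (r + 2) * y := by rw [← mul_assoc, ← pow_succ]
    have hconj : ∀ r : ℕ,
        (cs.simple i * (cs.simple j * t * cs.simple j) * cs.simple i
          = (cs.simple j * cs.simple i) ^ r * cs.simple j)
        ↔ (t = (cs.simple j * cs.simple i) ^ (r + 2) * cs.simple j) := by
      intro r
      rw [e1, conj_eq_iff, hd, helper]
    refine Prod.ext ?_ ?_
    · rw [e1]
      rw [pow_succ, mul_inv_rev]
      simp [mul_assoc]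
    · have hsplit : (2 * (k + 1)) = 2 + 2 * k := by omega
      rw [hsplit, Finset.sum_range_add]
      simp only [Finset.sum_range_succ, Finset.sum_range_zero]
      have hc2 : ∀ r, (if cs.simple i * (cs.simple j * t * cs.simple j) * cs.simple i
            = (cs.simple j * cs.simple i) ^ r * cs.simple j then (1 : ZMod 2) else 0)
          = if t = (cs.simple j * cs.simple i) ^ (2 + r) * cs.simple j then 1 else 0 := by
        intro r
        rw [if_congr ((hconj r).trans (by rw [show r + 2 = 2 + r from by omega])) rfl rfl]
      rw [Finset.sum_congr rfl fun r _ => hc2 r]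
      have hb : (cs.simple j * t * cs.simple j = cs.simple i)
          ↔ (t = (cs.simple j * cs.simple i) ^ 1 * cs.simple j) := by
        have : cs.simple j * t * cs.simple j = cs.simple j * t * (cs.simple j)⁻¹ := by
          rw [cs.inv_simple]
        rw [this, conj_eq_iff, cs.inv_simple, pow_one, mul_assoc]
      rw [if_congr hb rfl rfl]
      have h0 : (t = cs.simple j) ↔ (t = (cs.simple j * cs.simple i) ^ 0 * cs.simple j) := by
        rw [pow_zero, one_mul]
      rw [if_congr h0 rfl rfl]
      ring

open Classical in
theorem etaLiftable : M.IsLiftable (eta cs) := by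
  intro i j
  apply Equiv.ext
  intro p
  obtain ⟨t, ε⟩ := p
  rw [eta_pow_apply, cs.simple_mul_simple_pow]
  have hd : (cs.simple j * cs.simple i) ^ M i j = 1 := cs.simple_mul_simple_pow' i j
  have hsum : ∑ r ∈ Finset.range (2 * M i j),
      (if t = (cs.simple j * cs.simple i) ^ r * cs.simple j then (1 : ZMod 2) else 0) = 0 := by
    rw [two_mul, Finset.sum_range_add]
    have : ∀ r, (if t = (cs.simple j * cs.simple i) ^ (M i j + r) * cs.simple j
        then (1 : ZMod 2) else 0)
        = if t = (cs.simple j * cs.simple i) ^ r * cs.simple j then 1 else 0 := by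
      intro r
      rw [pow_add, hd, one_mul]
    rw [Finset.sum_congr rfl fun r _ => this r]
    have hz : ∀ z : ZMod 2, z + z = 0 := by decide
    exact hz _
  rw [hsum, add_zero]
  simp

/-- The Tits permutation representation. -/
noncomputable def phiRep : W →* Equiv.Perm (W × ZMod 2) :=
  cs.lift ⟨eta cs, etaLiftable cs⟩

theorem phiRep_simple (i : B) : phiRep cs (cs.simple i) = eta cs i :=
  cs.lift_apply_simple (etaLiftable cs) i

open Classical in
theorem phiRep_wordProd (ω : List B) (t : W) (ε : ZMod 2) :
    phiRep cs (cs.wordProd ω) (t, ε) =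
      (cs.wordProd ω * t * (cs.wordProd ω)⁻¹,
        ε + ((cs.rightInvSeq ω).map (fun u => if t = u then (1 : ZMod 2) else 0)).sum) := by
  induction ω generalizing t ε with
  | nil => simp
  | cons a ω ih =>
    rw [cs.wordProd_cons, map_mul, Equiv.Perm.mul_apply, ih, phiRep_simple, eta_apply]
    have hris : cs.rightInvSeq (a :: ω)
        = ((cs.wordProd ω)⁻¹ * cs.simple a * cs.wordProd ω) :: cs.rightInvSeq ω := rfl
    rw [hris]
    simp only [List.map_cons, List.sum_cons]
    refine Prod.ext ?_ ?_
    · simp [mul_assoc, mul_inv_rev, cs.inv_simple]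
    · have hiff : (cs.wordProd ω * t * (cs.wordProd ω)⁻¹ = cs.simple a)
          ↔ (t = (cs.wordProd ω)⁻¹ * cs.simple a * cs.wordProd ω) := by
        rw [conj_eq_iff]
      rw [if_congr hiff rfl rfl]
      ring

/-- The Tits cocycle: the parity with which the reflection `t` appears in the right
inversion sequence of (any word for) `w`. -/
noncomputable def cc (w t : W) : ZMod 2 := (phiRep cs w (t, 0)).2

theorem phiRep_apply (w t : W) (ε : ZMod 2) :
    phiRep cs w (t, ε) = (w * t * w⁻¹, ε + cc cs w t) := by
  obtain ⟨ω, rfl⟩ := cs.wordProd_surjective w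
  rw [phiRep_wordProd]
  unfold cc
  rw [phiRep_wordProd, zero_add]

theorem cc_mul (w₁ w₂ t : W) :
    cc cs (w₁ * w₂) t = cc cs w₂ t + cc cs w₁ (w₂ * t * w₂⁻¹) := by
  unfold cc
  rw [map_mul, Equiv.Perm.mul_apply, phiRep_apply, phiRep_apply, zero_add]
  rfl

open Classical in
theorem cc_simple (i : B) (t : W) :
    cc cs (cs.simple i) t = if t = cs.simple i then 1 else 0 := by
  unfold cc
  rw [phiRep_simple, eta_apply, zero_add]

theorem cc_one (t : W) : cc cs 1 t = 0 := by
  unfold cc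
  rw [map_one]
  rfl

open Classical in
theorem mem_rightInvSeq_of_cc (ω : List B) (t : W) (h : cc cs (cs.wordProd ω) t = 1) :
    t ∈ cs.rightInvSeq ω := by
  by_contra hmem
  have hzero : ((cs.rightInvSeq ω).map (fun u => if t = u then (1 : ZMod 2) else 0)).sum = 0 := by
    apply List.sum_eq_zero
    intro x hx
    obtain ⟨u, hu, rfl⟩ := List.mem_map.mp hx
    rw [if_neg]
    rintro rfl
    exact hmem hu
  have h' : cc cs (cs.wordProd ω) t
      = ((cs.rightInvSeq ω).map (fun u => if t = u then (1 : ZMod 2) else 0)).sum := by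
    unfold cc
    rw [phiRep_wordProd, zero_add]
  rw [h', hzero] at h
  exact (by decide : (0 : ZMod 2) ≠ 1) h

theorem length_mul_lt_of_cc {w t : W} (h : cc cs w t = 1) :
    cs.length (w * t) < cs.length w := by
  obtain ⟨ω, hred, rfl⟩ := cs.exists_reduced_word' w
  exact (cs.isRightInversion_of_mem_rightInvSeq hred
    (mem_rightInvSeq_of_cc cs ω t h)).2

theorem cc_self {t : W} (h : cs.IsReflection t) : cc cs t t = 1 := by
  obtain ⟨v, i, rfl⟩ := h
  set T := v * cs.simple i * v⁻¹ with hT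
  have e1 : v⁻¹ * T * (v⁻¹)⁻¹ = cs.simple i := by rw [hT]; group
  have c3 : cc cs v⁻¹ T + cc cs v (v⁻¹ * T * (v⁻¹)⁻¹) = 0 := by
    rw [← cc_mul, mul_inv_cancel, cc_one]
  rw [e1] at c3
  have c1 : cc cs T T = cc cs (cs.simple i * v⁻¹) T
      + cc cs v ((cs.simple i * v⁻¹) * T * (cs.simple i * v⁻¹)⁻¹) := by
    have : T = v * (cs.simple i * v⁻¹) := by rw [hT, mul_assoc]
    nth_rewrite 1 [this]
    rw [cc_mul]
  have e2 : (cs.simple i * v⁻¹) * T * (cs.simple i * v⁻¹)⁻¹ = cs.simple i := by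
    rw [hT, mul_inv_rev, cs.inv_simple]
    simp [mul_assoc, cs.simple_mul_simple_cancel_left]
  have c2 : cc cs (cs.simple i * v⁻¹) T = cc cs v⁻¹ T + 1 := by
    rw [cc_mul, e1, cc_simple, if_pos rfl]
  rw [c1, e2, c2]
  revert c3
  generalize cc cs v⁻¹ T = a
  generalize cc cs v (cs.simple i) = b
  revert a b
  decide


theorem cc_of_length_lt {w t : W} (hrefl : cs.IsReflection t)
    (h : cs.length (w * t) < cs.length w) : cc cs w t = 1 := by
  have hor : cc cs w t = 0 ∨ cc cs w t = 1 := by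
    have : ∀ x : ZMod 2, x = 0 ∨ x = 1 := by decide
    exact this _
  rcases hor with h0 | h1
  · exfalso
    have h2 : cc cs (w * t) t = 1 := by
      rw [cc_mul]
      have e : t * t * t⁻¹ = t := by rw [hrefl.mul_self, one_mul, hrefl.inv]
      rw [e, cc_self cs hrefl, h0, add_zero]
    have h3 := length_mul_lt_of_cc cs h2
    rw [mul_assoc, hrefl.mul_self, mul_one] at h3
    omega
  · exact h1

theorem exchange {ω : List B} {k : B}
    (h : cs.length (cs.wordProd ω * cs.simple k) < cs.length (cs.wordProd ω)) :
    ∃ r < ω.length, cs.wordProd ω * cs.simple k = cs.wordProd (ω.eraseIdx r) := by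
  have h1 : cc cs (cs.wordProd ω) (cs.simple k) = 1 :=
    cc_of_length_lt cs (cs.isReflection_simple k) h
  have h2 : cs.simple k ∈ cs.rightInvSeq ω := mem_rightInvSeq_of_cc cs ω _ h1
  obtain ⟨r, hr, hget⟩ := List.mem_iff_getElem.mp h2
  have hr' : r < ω.length := by
    have := cs.length_rightInvSeq ω
    omega
  refine ⟨r, hr', ?_⟩
  have h3 := cs.wordProd_mul_getD_rightInvSeq ω r
  rwa [List.getD_eq_getElem _ _ hr, hget] at h3

/-- The generating set of a standard parabolic subgroup. -/
def genset (P : B → Prop) : Set W := {w | ∃ j, P j ∧ w = cs.simple j}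

theorem wordProd_mem (P : B → Prop) (ω : List B) (h : ∀ l ∈ ω, P l) :
    cs.wordProd ω ∈ Subgroup.closure (genset cs P) := by
  induction ω with
  | nil => simp [one_mem]
  | cons a ω ih =>
    rw [cs.wordProd_cons]
    exact mul_mem (Subgroup.subset_closure ⟨a, h a List.mem_cons_self, rfl⟩)
      (ih fun l hl => h l (List.mem_cons_of_mem _ hl))

theorem mul_wordProd_P (P : B → Prop) {w : W}
    (hw : ∃ ω, cs.IsReduced ω ∧ (∀ l ∈ ω, P l) ∧ w = cs.wordProd ω) (ω₂ : List B)
    (h₂ : ∀ l ∈ ω₂, P l) :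
    ∃ ω, cs.IsReduced ω ∧ (∀ l ∈ ω, P l) ∧ w * cs.wordProd ω₂ = cs.wordProd ω := by
  induction ω₂ using List.reverseRecOn with
  | nil => simpa using hw
  | append_singleton δ j ih =>
    have hδ : ∀ l ∈ δ, P l := fun l hl => h₂ l (by simp [hl])
    obtain ⟨χ, hred, hP, heq⟩ := ih hδ
    have hstep : w * cs.wordProd (δ ++ [j]) = cs.wordProd χ * cs.simple j := by
      rw [cs.wordProd_append, cs.wordProd_singleton, ← mul_assoc, ← heq]
    have hPj : P j := h₂ j (by simp)
    rcases cs.length_mul_simple (cs.wordProd χ) j with hp | hm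
    · refine ⟨χ ++ [j], ?_, ?_, ?_⟩
      · show cs.length (cs.wordProd (χ ++ [j])) = (χ ++ [j]).length
        rw [cs.wordProd_append, cs.wordProd_singleton, hp, hred]
        simp
      · intro l hl
        rcases List.mem_append.mp hl with h | h
        · exact hP l h
        · rw [List.mem_singleton.mp h]; exact hPj
      · rw [hstep, cs.wordProd_append, cs.wordProd_singleton]
    · have hlt : cs.length (cs.wordProd χ * cs.simple j) < cs.length (cs.wordProd χ) := by
        omega
      obtain ⟨r, hr, herase⟩ := exchange cs hlt
      refine ⟨χ.eraseIdx r, ?_, ?_, ?_⟩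
      · show cs.length (cs.wordProd (χ.eraseIdx r)) = (χ.eraseIdx r).length
        have hlen := List.length_eraseIdx_add_one hr
        rw [← herase]
        have : cs.length (cs.wordProd χ) = χ.length := hred
        omega
      · intro l hl
        exact hP l ((χ.eraseIdx_sublist r).subset hl)
      · rw [hstep, herase]

theorem exists_reduced_word_P (P : B → Prop) {w : W}
    (hw : w ∈ Subgroup.closure (genset cs P)) :
    ∃ ω, cs.IsReduced ω ∧ (∀ l ∈ ω, P l) ∧ w = cs.wordProd ω := by
  induction hw using Subgroup.closure_induction with
  | mem x hx =>
    obtain ⟨j, hj, rfl⟩ := hx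
    refine ⟨[j], ?_, ?_, ?_⟩
    · show cs.length (cs.wordProd [j]) = _
      rw [cs.wordProd_singleton, cs.length_simple]
      simp
    · intro l hl; rw [List.mem_singleton.mp hl]; exact hj
    · rw [cs.wordProd_singleton]
  | one =>
    refine ⟨[], ?_, ?_, ?_⟩
    · show cs.length (cs.wordProd []) = _
      simp
    · simp
    · simp
  | mul x y hx hy ihx ihy =>
    obtain ⟨ω₂, hred₂, hP₂, hy'⟩ := ihy
    rw [hy']
    exact mul_wordProd_P cs P ihx ω₂ hP₂
  | inv x hx ihx =>
    obtain ⟨ω, hred, hP, rfl⟩ := ihx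
    refine ⟨ω.reverse, (cs.isReduced_reverse_iff ω).mpr hred,
      fun l hl => hP l (List.mem_reverse.mp hl), (cs.wordProd_reverse ω).symm⟩

theorem length_simple_mul_of_not_P (hinj : Function.Injective cs.simple) {P : B → Prop} {k : B}
    (hk : ¬ P k) {v : W} (hv : v ∈ Subgroup.closure (genset cs P)) :
    cs.length (cs.simple k * v) = cs.length v + 1 := by
  rcases cs.length_simple_mul v k with h | h
  · exact h
  · exfalso
    obtain ⟨ω, hred, hP, rfl⟩ := exists_reduced_word_P cs P hv
    have hlt : cs.length (cs.wordProd ω.reverse * cs.simple k)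
        < cs.length (cs.wordProd ω.reverse) := by
      rw [cs.wordProd_reverse]
      have e : (cs.wordProd ω)⁻¹ * cs.simple k = (cs.simple k * cs.wordProd ω)⁻¹ := by
        rw [mul_inv_rev, cs.inv_simple]
      rw [e, cs.length_inv, cs.length_inv]
      omega
    obtain ⟨r, hr, herase⟩ := exchange cs hlt
    have hk_mem : cs.simple k ∈ Subgroup.closure (genset cs P) := by
      have e2 : cs.simple k = cs.wordProd ω * cs.wordProd (ω.reverse.eraseIdx r) := by
        rw [← herase, cs.wordProd_reverse]
        group
      rw [e2]
      refine mul_mem (wordProd_mem cs P ω hP) (wordProd_mem cs P _ ?_)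
      intro l hl
      exact hP l (List.mem_reverse.mp (((ω.reverse).eraseIdx_sublist r).subset hl))
    obtain ⟨χ, hredχ, hPχ, hχ⟩ := exists_reduced_word_P cs P hk_mem
    have hlen : χ.length = 1 := by
      have h1 : cs.length (cs.wordProd χ) = χ.length := hredχ
      rw [← hχ, cs.length_simple] at h1
      omega
    obtain ⟨l, rfl⟩ := List.length_eq_one_iff.mp hlen
    have : cs.simple k = cs.simple l := by rwa [cs.wordProd_singleton] at hχ
    exact hk (hinj this ▸ hPχ l (List.mem_singleton.mpr rfl))


theorem swap3 {α : Type*} [DecidableEq α] {a b c : α} (hab : a ≠ b) (hbc : b ≠ c)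
    (hac : a ≠ c) : (Equiv.swap a b * Equiv.swap b c) ^ 3 = 1 := by
  have hσ : ∀ x, (Equiv.swap a b * Equiv.swap b c) x
      = if x = a then b else if x = b then c else if x = c then a else x := by
    intro x
    show Equiv.swap a b (Equiv.swap b c x) = _
    by_cases hxa : x = a
    · subst hxa
      rw [if_pos rfl, Equiv.swap_apply_of_ne_of_ne hab hac, Equiv.swap_apply_left]
    · by_cases hxb : x = b
      · subst hxb
        rw [if_neg hxa, if_pos rfl, Equiv.swap_apply_left,
          Equiv.swap_apply_of_ne_of_ne (Ne.symm hac) (Ne.symm hbc)]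
      · by_cases hxc : x = c
        · subst hxc
          rw [if_neg hxa, if_neg hxb, if_pos rfl, Equiv.swap_apply_right,
            Equiv.swap_apply_right]
        · rw [if_neg hxa, if_neg hxb, if_neg hxc,
            Equiv.swap_apply_of_ne_of_ne hxb hxc, Equiv.swap_apply_of_ne_of_ne hxa hxb]
  have key : ∀ x, (Equiv.swap a b * Equiv.swap b c) ((Equiv.swap a b * Equiv.swap b c)
      ((Equiv.swap a b * Equiv.swap b c) x)) = x := by
    have s1 : (Equiv.swap a b * Equiv.swap b c) a = b := by rw [hσ, if_pos rfl]
    have s2 : (Equiv.swap a b * Equiv.swap b c) b = c := by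
      rw [hσ, if_neg (Ne.symm hab), if_pos rfl]
    have s3 : (Equiv.swap a b * Equiv.swap b c) c = a := by
      rw [hσ, if_neg (Ne.symm hac), if_neg (Ne.symm hbc), if_pos rfl]
    intro x
    by_cases hxa : x = a
    · subst hxa; rw [s1, s2, s3]
    · by_cases hxb : x = b
      · subst hxb; rw [s2, s3, s1]
      · by_cases hxc : x = c
        · subst hxc; rw [s3, s1, s2]
        · have s4 : (Equiv.swap a b * Equiv.swap b c) x = x := by
            rw [hσ, if_neg hxa, if_neg hxb, if_neg hxc]
          rw [s4, s4, s4]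
  apply Equiv.ext
  intro x
  show ((Equiv.swap a b * Equiv.swap b c) ^ 3) x = x
  rw [pow_succ, pow_succ, pow_one]
  simp only [Equiv.Perm.mul_apply]
  exact key x

theorem swap2 {α : Type*} [DecidableEq α] {a b c d : α} (hab : a ≠ b) (hcd : c ≠ d)
    (hac : a ≠ c) (had : a ≠ d) (hbc : b ≠ c) (hbd : b ≠ d) :
    (Equiv.swap a b * Equiv.swap c d) ^ 2 = 1 := by
  have hσ : ∀ x, (Equiv.swap a b * Equiv.swap c d) x
      = if x = a then b else if x = b then a else if x = c then d
        else if x = d then c else x := by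
    intro x
    show Equiv.swap a b (Equiv.swap c d x) = _
    by_cases hxa : x = a
    · subst hxa
      rw [if_pos rfl, Equiv.swap_apply_of_ne_of_ne hac had, Equiv.swap_apply_left]
    · by_cases hxb : x = b
      · subst hxb
        rw [if_neg hxa, if_pos rfl, Equiv.swap_apply_of_ne_of_ne hbc hbd,
          Equiv.swap_apply_right]
      · by_cases hxc : x = c
        · subst hxc
          rw [if_neg hxa, if_neg hxb, if_pos rfl, Equiv.swap_apply_left,
            Equiv.swap_apply_of_ne_of_ne (Ne.symm had) (Ne.symm hbd)]
        · by_cases hxd : x = d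
          · subst hxd
            rw [if_neg hxa, if_neg hxb, if_neg hxc, if_pos rfl, Equiv.swap_apply_right,
              Equiv.swap_apply_of_ne_of_ne (Ne.symm hac) (Ne.symm hbc)]
          · rw [if_neg hxa, if_neg hxb, if_neg hxc, if_neg hxd,
              Equiv.swap_apply_of_ne_of_ne hxc hxd, Equiv.swap_apply_of_ne_of_ne hxa hxb]
  have key : ∀ x, (Equiv.swap a b * Equiv.swap c d)
      ((Equiv.swap a b * Equiv.swap c d) x) = x := by
    have s1 : (Equiv.swap a b * Equiv.swap c d) a = b := by rw [hσ, if_pos rfl]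
    have s2 : (Equiv.swap a b * Equiv.swap c d) b = a := by
      rw [hσ, if_neg (Ne.symm hab), if_pos rfl]
    have s3 : (Equiv.swap a b * Equiv.swap c d) c = d := by
      rw [hσ, if_neg (Ne.symm hac), if_neg (Ne.symm hbc), if_pos rfl]
    have s4 : (Equiv.swap a b * Equiv.swap c d) d = c := by
      rw [hσ, if_neg (Ne.symm had), if_neg (Ne.symm hbd), if_neg (Ne.symm hcd), if_pos rfl]
    intro x
    by_cases hxa : x = a
    · subst hxa; rw [s1, s2]
    · by_cases hxb : x = b
      · subst hxb; rw [s2, s1]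
      · by_cases hxc : x = c
        · subst hxc; rw [s3, s4]
        · by_cases hxd : x = d
          · subst hxd; rw [s4, s3]
          · have s5 : (Equiv.swap a b * Equiv.swap c d) x = x := by
              rw [hσ, if_neg hxa, if_neg hxb, if_neg hxc, if_neg hxd]
            rw [s5, s5]
  apply Equiv.ext
  intro x
  show ((Equiv.swap a b * Equiv.swap c d) ^ 2) x = x
  rw [pow_succ, pow_one]
  simp only [Equiv.Perm.mul_apply]
  exact key x

/-- In the type `C_m` Coxeter system, the simple reflections are pairwise distinct. -/
theorem cm_simple_injective (m : ℕ) (hm : 2 ≤ m) {W : Type*} [Group W]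
    {M : CoxeterMatrix (Fin m)}
    (hM : ∀ i j : Fin m, M i j =
      if i = j then 1
      else if i.val + 1 = j.val ∨ j.val + 1 = i.val then
        (if i.val = m - 1 ∨ j.val = m - 1 then 4 else 3)
      else 2)
    (cs : CoxeterSystem M W) : Function.Injective cs.simple := by
  classical
  set f : Fin m → Equiv.Perm (Fin m) :=
    fun j => if h : j.val + 1 < m then Equiv.swap j ⟨j.val + 1, h⟩ else 1 with hf
  have hsq : ∀ j, f j * f j = 1 := by
    intro j
    simp only [hf]
    split_ifs with h
    · exact Equiv.swap_mul_self _ _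
    · simp
  have hpow4 : ∀ x y : Equiv.Perm (Fin m), x * x = 1 → y * y = 1 → (x = 1 ∨ y = 1) →
      (x * y) ^ 4 = 1 := by
    rintro x y hx hy (rfl | rfl)
    · rw [one_mul, show (4 : ℕ) = 2 + 2 from rfl, pow_add, pow_two, hy, one_mul]
    · rw [mul_one, show (4 : ℕ) = 2 + 2 from rfl, pow_add, pow_two, hx, one_mul]
  have hlift : M.IsLiftable f := by
    intro k l
    rw [hM k l]
    by_cases hkl : k = l
    · subst hkl
      rw [if_pos rfl, pow_one, hsq]
    · rw [if_neg hkl]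
      have hklv : k.val ≠ l.val := fun hv => hkl (Fin.ext hv)
      by_cases hadj : k.val + 1 = l.val ∨ l.val + 1 = k.val
      · rw [if_pos hadj]
        by_cases hlast : k.val = m - 1 ∨ l.val = m - 1
        · rw [if_pos hlast]
          refine hpow4 (f k) (f l) (hsq k) (hsq l) ?_
          rcases hlast with h | h
          · left; simp only [hf]; rw [dif_neg (by omega)]
          · right; simp only [hf]; rw [dif_neg (by omega)]
        · rw [if_neg hlast]
          push_neg at hlast
          have hkm : k.val < m - 1 := by have := k.isLt; omega
          have hlm : l.val < m - 1 := by have := l.isLt; omega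
          have hk1 : k.val + 1 < m := by omega
          have hl1 : l.val + 1 < m := by omega
          simp only [hf]
          rw [dif_pos hk1, dif_pos hl1]
          rcases hadj with h | h
          · have e : (⟨k.val + 1, hk1⟩ : Fin m) = l := Fin.ext h
            rw [e]
            refine swap3 hkl ?_ ?_
            · simp only [ne_eq, Fin.ext_iff, Fin.val_mk]; omega
            · simp only [ne_eq, Fin.ext_iff, Fin.val_mk]; omega
          · have e : (⟨l.val + 1, hl1⟩ : Fin m) = k := Fin.ext h
            rw [e, Equiv.swap_comm k ⟨k.val + 1, hk1⟩, Equiv.swap_comm l k]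
            refine swap3 ?_ hkl ?_
            · simp only [ne_eq, Fin.ext_iff, Fin.val_mk]; omega
            · simp only [ne_eq, Fin.ext_iff, Fin.val_mk]; omega
      · rw [if_neg hadj]
        push_neg at hadj
        by_cases h1 : k.val + 1 < m
        · by_cases h2 : l.val + 1 < m
          · simp only [hf]
            rw [dif_pos h1, dif_pos h2]
            refine swap2 ?_ ?_ hkl ?_ ?_ ?_ <;>
              (simp only [ne_eq, Fin.ext_iff, Fin.val_mk]; omega)
          · have e : f l = 1 := by simp only [hf]; rw [dif_neg h2]
            rw [e, mul_one, pow_two, hsq]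
        · have e : f k = 1 := by simp only [hf]; rw [dif_neg h1]
          rw [e, one_mul, pow_two, hsq]
  intro k l h
  by_contra hkl
  have hklv : k.val ≠ l.val := fun hv => hkl (Fin.ext hv)
  have hfe : f k = f l := by
    have h2 := congrArg (cs.lift ⟨f, hlift⟩) h
    rwa [cs.lift_apply_simple, cs.lift_apply_simple] at h2
  by_cases h1 : k.val + 1 < m
  · by_cases h2 : l.val + 1 < m
    · have h3 := congrArg (fun σ : Equiv.Perm (Fin m) => σ k) hfe
      simp only [hf, dif_pos h1, dif_pos h2] at h3
      rw [Equiv.swap_apply_left] at h3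
      rcases eq_or_ne k (⟨l.val + 1, h2⟩ : Fin m) with hc | hc
      · have h4 : Equiv.swap l ⟨l.val + 1, h2⟩ k = l := by
          rw [hc]; exact Equiv.swap_apply_right _ _
        have hv := congrArg Fin.val (h3.trans h4)
        simp only [Fin.val_mk] at hv
        have hcv := congrArg Fin.val hc
        simp only [Fin.val_mk] at hcv
        omega
      · rw [Equiv.swap_apply_of_ne_of_ne (Fin.ne_of_val_ne hklv) hc] at h3
        have hv := congrArg Fin.val h3
        simp only [Fin.val_mk] at hv
        omega
    · have h3 := congrArg (fun σ : Equiv.Perm (Fin m) => σ k) hfe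
      simp only [hf, dif_pos h1, dif_neg h2] at h3
      rw [Equiv.swap_apply_left] at h3
      have hv := congrArg Fin.val h3
      simp only [Fin.val_mk, Equiv.Perm.one_apply] at hv
      omega
  · by_cases h2 : l.val + 1 < m
    · have h3 := congrArg (fun σ : Equiv.Perm (Fin m) => σ l) hfe
      simp only [hf, dif_neg h1, dif_pos h2] at h3
      rw [Equiv.swap_apply_left] at h3
      have hv := congrArg Fin.val h3
      simp only [Fin.val_mk, Equiv.Perm.one_apply] at hv
      omega
    · exact hklv (by omega)


end Statement17Aux

open Statement17Aux




/- Setup: `(W, S)` is the Coxeter system of type `C_m` (`m ≥ 2`), with simple reflections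
`s_1, …, s_m` (indexed here by `Fin m`, the 1-indexed `s_i` being `simple ⟨i-1⟩`), subject to
`s_i² = 1`, `(s_i s_{i+1})³ = 1` for `i ≤ m−2`, `(s_{m−1} s_m)⁴ = 1`, and `(s_i s_j)² = 1` for
`|i − j| ≥ 2`.  For `1 ≤ i ≤ m` let `w_i := s_{m+1−i} s_{m+2−i} ⋯ s_m`, and for
`0 ≤ i ≤ m−1` let `W_i` be the standard parabolic subgroup generated by `s_1, …, s_{m−1−i}`. -/

/-- The element `w_i = s_{m+1-i} ⋯ s_m` (1-indexed), i.e. the product of the last `i` simple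
reflections in increasing order. -/
def wElt {m : ℕ} (hm : 0 < m) {W : Type} [Group W] {M : CoxeterMatrix (Fin m)}
    (cs : CoxeterSystem M W) (i : ℕ) : W :=
  (List.ofFn fun j : Fin i => cs.simple ⟨(m - i + j.val) % m, Nat.mod_lt _ hm⟩).prod

/-- The standard parabolic subgroup `W_i` generated by `{s_1, …, s_{m−1−i}}` (1-indexed),
i.e. by the simple reflections with (0-indexed) index `< m − 1 − i`. -/
def WSub {m : ℕ} {W : Type} [Group W] {M : CoxeterMatrix (Fin m)}
    (cs : CoxeterSystem M W) (i : ℕ) : Subgroup W :=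
  Subgroup.closure {w | ∃ j : Fin m, j.val < m - 1 - i ∧ w = cs.simple j}

/- STATEMENT 17: For every `i` with `1 ≤ i ≤ m−1`:
(a) `w_i` commutes with every element of `W_i`;
(b) `ℓ(w_i·u) = i + ℓ(u)` for every `u ∈ W_i` (in particular `ℓ(w_i) = i`);
(c) if `x_i` has maximal length among the elements of `W_i`, then every element of the double
coset `W_i·w_i·W_i` has length at most `ℓ(w_i·x_i) = i + ℓ(x_i)`, i.e. `w_i·x_i` is a longest
element of `W_i·w_i·W_i`. -/
theorem statement17
    (m : ℕ) (hm : 2 ≤ m)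
    (W : Type) [Group W] (M : CoxeterMatrix (Fin m))
    -- the Coxeter matrix of type C_m
    (hM : ∀ i j : Fin m, M i j =
      if i = j then 1
      else if i.val + 1 = j.val ∨ j.val + 1 = i.val then
        (if i.val = m - 1 ∨ j.val = m - 1 then 4 else 3)
      else 2)
    (cs : CoxeterSystem M W)
    (i : ℕ) (hi1 : 1 ≤ i) (him : i ≤ m - 1) :
    -- (a)
    (∀ u ∈ WSub cs i, wElt (by omega) cs i * u = u * wElt (by omega) cs i) ∧
    -- (b)
    (∀ u ∈ WSub cs i,
      cs.length (wElt (by omega) cs i * u) = i + cs.length u) ∧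
    (cs.length (wElt (by omega) cs i) = i) ∧
    -- (c)
    (∀ x ∈ WSub cs i, (∀ u ∈ WSub cs i, cs.length u ≤ cs.length x) →
      (cs.length (wElt (by omega) cs i * x) = i + cs.length x) ∧
      (∀ a ∈ WSub cs i, ∀ b ∈ WSub cs i,
        cs.length (a * wElt (by omega) cs i * b) ≤ cs.length (wElt (by omega) cs i * x))) := by
  classical
  have hm0 : 0 < m := by omega
  have hinj : Function.Injective cs.simple := cm_simple_injective m hm hM cs
  set κ : ℕ → List (Fin m) := fun r => List.ofFn
    (fun j : Fin r => (⟨(m - r + j.val) % m, Nat.mod_lt _ hm0⟩ : Fin m)) with hκ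
  have hwElt : wElt (show 0 < m by omega) cs i = cs.wordProd (κ i) := by
    simp only [wElt, CoxeterSystem.wordProd, hκ, List.map_ofFn]
    rfl
  have hκ0 : κ 0 = [] := by simp [hκ]
  have hκs : ∀ r, r < m → κ (r + 1) = (⟨m - r - 1, by omega⟩ : Fin m) :: κ r := by
    intro r hr
    simp only [hκ]
    rw [List.ofFn_succ]
    congr 1
    · apply Fin.ext
      simp only [Fin.val_mk, Fin.val_zero]
      rw [Nat.add_zero, Nat.mod_eq_of_lt (by omega)]
      omega
    · congr 1
      funext j
      apply Fin.ext
      simp only [Fin.val_mk, Fin.val_succ]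
      congr 1
      omega
  have hπκs : ∀ r, r < m → cs.wordProd (κ (r + 1))
      = cs.simple ⟨m - r - 1, by omega⟩ * cs.wordProd (κ r) := by
    intro r hr
    rw [hκs r hr, cs.wordProd_cons]
  set Q : ℕ → Fin m → Prop := fun r l => l.val < m - 1 - i ∨ m - r ≤ l.val with hQ
  have hWS : WSub cs i
      = Subgroup.closure (genset cs (fun j : Fin m => j.val < m - 1 - i)) := rfl
  have hmono : ∀ (P R : Fin m → Prop), (∀ l, P l → R l) →
      Subgroup.closure (genset cs P) ≤ Subgroup.closure (genset cs R) := by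
    intro P R h
    apply Subgroup.closure_mono
    rintro w ⟨j, hj, rfl⟩
    exact ⟨j, h j hj, rfl⟩
  have key : ∀ u, u ∈ WSub cs i → ∀ r : ℕ, r ≤ i →
      cs.length (cs.wordProd (κ r) * u) = r + cs.length u ∧
      cs.wordProd (κ r) * u ∈ Subgroup.closure (genset cs (Q r)) := by
    intro u hu r
    induction r with
    | zero =>
      intro _
      rw [hκ0, cs.wordProd_nil, one_mul]
      constructor
      · omega
      · refine hmono _ _ (fun l hl => Or.inl hl) ?_
        exact hWS ▸ hu
    | succ r ih =>
      intro hr1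
      obtain ⟨ihl, ihm⟩ := ih (by omega)
      have hrm : r < m := by omega
      have hk : ¬ Q r (⟨m - r - 1, by omega⟩ : Fin m) := by
        simp only [hQ, Fin.val_mk]
        push_neg
        omega
      have hlen := length_simple_mul_of_not_P cs hinj hk ihm
      have hmem' : cs.simple ⟨m - r - 1, by omega⟩ * (cs.wordProd (κ r) * u)
          ∈ Subgroup.closure (genset cs (Q (r + 1))) := by
        refine mul_mem (Subgroup.subset_closure ⟨⟨m - r - 1, by omega⟩, ?_, rfl⟩) ?_
        · exact Or.inr (by simp only [Fin.val_mk]; omega)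
        · exact hmono _ _ (fun l hl => hl.imp id (fun h => by omega)) ihm
      rw [hπκs r hrm, mul_assoc]
      exact ⟨by rw [hlen, ihl]; omega, hmem'⟩
  have hb : ∀ u ∈ WSub cs i,
      cs.length (wElt (show 0 < m by omega) cs i * u) = i + cs.length u := by
    intro u hu
    rw [hwElt]
    exact (key u hu i le_rfl).1
  have hbase : cs.length (wElt (show 0 < m by omega) cs i) = i := by
    have := hb 1 (one_mem _)
    simpa using this
  have hcommgen : ∀ l j : Fin m, m - i ≤ l.val → j.val < m - 1 - i →
      Commute (cs.simple l) (cs.simple j) := by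
    intro l j hl hj
    have hM2 : M l j = 2 := by
      rw [hM l j, if_neg, if_neg]
      · rintro (h | h) <;> omega
      · intro h
        have := congrArg Fin.val h
        omega
    have hp := cs.simple_mul_simple_pow l j
    rw [hM2] at hp
    have hp2 : (cs.simple l * cs.simple j) * (cs.simple l * cs.simple j) = 1 := by
      rw [← pow_two]; exact hp
    have hinv : cs.simple l * cs.simple j = (cs.simple l * cs.simple j)⁻¹ :=
      eq_inv_of_mul_eq_one_left hp2
    show cs.simple l * cs.simple j = cs.simple j * cs.simple l
    rw [hinv, mul_inv_rev, cs.inv_simple, cs.inv_simple]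
  have ha : ∀ u ∈ WSub cs i,
      wElt (show 0 < m by omega) cs i * u = u * wElt (show 0 < m by omega) cs i := by
    intro u hu
    have hu' : u ∈ Subgroup.closure (genset cs (fun j : Fin m => j.val < m - 1 - i)) :=
      hWS ▸ hu
    clear hu
    have hC : Commute (wElt (show 0 < m by omega) cs i) u := by
      induction hu' using Subgroup.closure_induction with
      | mem x hx =>
        obtain ⟨j, hj, rfl⟩ := hx
        rw [hwElt]
        unfold CoxeterSystem.wordProd
        refine (Commute.list_prod_right _ _ ?_).symm
        intro y hy
        obtain ⟨l, hl, rfl⟩ := List.mem_map.mp hy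
        simp only [hκ] at hl
        obtain ⟨jj, rfl⟩ := List.mem_ofFn.mp hl
        refine (hcommgen _ j ?_ hj).symm
        simp only [Fin.val_mk]
        rw [Nat.mod_eq_of_lt (by omega)]
        omega
      | one => exact Commute.one_right _
      | mul x y hx hy ihx ihy => exact ihx.mul_right ihy
      | inv x hx ihx => exact ihx.inv_right
    exact hC
  refine ⟨ha, hb, hbase, ?_⟩
  intro x hx hmax
  refine ⟨hb x hx, ?_⟩
  intro a haa b hbb
  have h1 : a * wElt (show 0 < m by omega) cs i * b
      = wElt (show 0 < m by omega) cs i * (a * b) := by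
    rw [← ha a haa, mul_assoc]
  rw [h1, hb (a * b) (mul_mem haa hbb), hb x hx]
  exact Nat.add_le_add_left (hmax (a * b) (mul_mem haa hbb)) i
end
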